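/- Let C be a class of permutations closed under substitution, under taking patterns, and under inverse. Then every permutation obtained by delayed substitution from C is a composition of at most 3 permutations of C. -/

import Mathlib

/-- `π` is a pattern of `σ`: there is a strictly increasing map `f` such that the relative
order of values of `σ` on the image of `f` matches that of `π`. -/
def IsPattern {p m : ℕ} (π : Equiv.Perm (Fin p)) (σ : Equiv.Perm (Fin m)) : Prop :=
  ∃ f : Fin p → Fin m, StrictMono f ∧ ∀ i j : Fin p, π i < π j ↔ σ (f i) < σ (f j)

/-- The permutation 2413 (0-indexed values 1,3,0,2). -/
def perm2413 : Equiv.Perm (Fin 4) where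
  toFun := ![1, 3, 0, 2]
  invFun := ![2, 0, 3, 1]
  left_inv := by intro x; fin_cases x <;> rfl
  right_inv := by intro x; fin_cases x <;> rfl

/-- The permutation 3142 (0-indexed values 2,0,3,1). -/
def perm3142 : Equiv.Perm (Fin 4) where
  toFun := ![2, 0, 3, 1]
  invFun := ![1, 3, 0, 2]
  left_inv := by intro x; fin_cases x <;> rfl
  right_inv := by intro x; fin_cases x <;> rfl

/-- A permutation is separable iff it avoids both 2413 and 3142 as patterns. -/
def Separable {n : ℕ} (σ : Equiv.Perm (Fin n)) : Prop :=
  ¬ IsPattern perm2413 σ ∧ ¬ IsPattern perm3142 σ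

/-- A class of permutations: one set of permutations for each size. -/
abbrev PermClass := ∀ n : ℕ, Equiv.Perm (Fin n) → Prop

/-- `σ` is (an isomorphic copy of) the permutation of the biorder obtained by restricting
the two orders `lt1`, `lt2` to the subset `S`: the enumeration `e` lists `S` increasingly
with respect to `lt1`, and the relative order of the values of `σ` matches `lt2`. -/
def BiorderPerm {V : Type*} (lt1 lt2 : V → V → Prop) (S : Set V) {n : ℕ}
    (σ : Equiv.Perm (Fin n)) : Prop :=
  ∃ e : Fin n → V, (∀ i, e i ∈ S) ∧ (∀ x ∈ S, ∃ i, e i = x) ∧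
    (∀ i j : Fin n, i < j ↔ lt1 (e i) (e j)) ∧
    (∀ i j : Fin n, σ i < σ j ↔ lt2 (e i) (e j))

/-- Composition of two classes of permutations: `C ∘ D = {σ ∘ τ}`. -/
def PermClass.comp (C D : PermClass) : PermClass :=
  fun n σ => ∃ τ₁ τ₂ : Equiv.Perm (Fin n), C n τ₁ ∧ D n τ₂ ∧ σ = τ₁ * τ₂

/-- `C^k`: compositions of `k` permutations of `C` of the same size. -/
def PermClass.pow (C : PermClass) (k : ℕ) : PermClass :=
  fun n σ => ∃ l : List (Equiv.Perm (Fin n)), l.length = k ∧ (∀ τ ∈ l, C n τ) ∧ l.prod = σ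

/-- `C⁻¹ = {σ⁻¹ : σ ∈ C}`. -/
def PermClass.inv (C : PermClass) : PermClass := fun n σ => C n σ⁻¹

/-- `σ` is the (iterated one-step) substitution of the permutations `α i` inside `τ`:
there is a monotone surjection `g` onto `Fin m` whose fibres are the blocks, the pattern
of `σ` induced on the `i`-th block is `α i`, and distinct blocks compare according
to `τ`. -/
def IsInflation {m : ℕ} (τ : Equiv.Perm (Fin m)) (ns : Fin m → ℕ)
    (α : ∀ i : Fin m, Equiv.Perm (Fin (ns i))) {n : ℕ} (σ : Equiv.Perm (Fin n)) : Prop :=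
  ∃ g : Fin n → Fin m, Monotone g ∧ Function.Surjective g ∧
    (∀ i : Fin m, BiorderPerm (· < ·) (fun a b => σ a < σ b) {x | g x = i} (α i)) ∧
    (∀ x y : Fin n, g x ≠ g y → (σ x < σ y ↔ τ (g x) < τ (g y)))

/-- `C` is closed under substitution: substituting permutations of `C` inside a
permutation of `C` stays in `C`. -/
def ClosedUnderSubstitution (C : PermClass) : Prop :=
  ∀ (m : ℕ) (τ : Equiv.Perm (Fin m)) (ns : Fin m → ℕ)
    (α : ∀ i : Fin m, Equiv.Perm (Fin (ns i))) (n : ℕ) (σ : Equiv.Perm (Fin n)),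
    C m τ → (∀ i, C (ns i) (α i)) → IsInflation τ ns α σ → C n σ

/-- The order-reversing permutation of `Fin n`. -/
def finRevPerm (n : ℕ) : Equiv.Perm (Fin n) :=
  ⟨Fin.rev, Fin.rev, Fin.rev_rev, Fin.rev_rev⟩

/-- `C` is closed under symmetry: conjugating by the decreasing permutation stays in `C`. -/
def ClosedUnderSymmetry (C : PermClass) : Prop :=
  ∀ (n : ℕ) (σ : Equiv.Perm (Fin n)), C n σ → C n (finRevPerm n * σ * finRevPerm n)

/-- `C` is closed under taking patterns. -/
def ClosedUnderPatterns (C : PermClass) : Prop :=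
  ∀ (p m : ℕ) (π : Equiv.Perm (Fin p)) (σ : Equiv.Perm (Fin m)),
    IsPattern π σ → C m σ → C p π

/-- `C` is closed under inverse. -/
def ClosedUnderInverse (C : PermClass) : Prop :=
  ∀ (n : ℕ) (σ : Equiv.Perm (Fin n)), C n σ → C n σ⁻¹

/-- The class of separable permutations. -/
def SepClass : PermClass := fun _ σ => Separable σ

/-- `σ` is a `k`-shuffle of the class `C`: its domain can be partitioned into `k` sets,
on each of which the induced pattern of `σ` belongs to `C`. -/
def ShuffleOf (k : ℕ) (C : PermClass) {n : ℕ} (σ : Equiv.Perm (Fin n)) : Prop :=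
  ∃ X : Fin k → Set (Fin n), (∀ x : Fin n, ∃! i, x ∈ X i) ∧
    ∀ (i : Fin k) (m : ℕ) (τ : Equiv.Perm (Fin m)),
      BiorderPerm (· < ·) (fun a b => σ a < σ b) (X i) τ → C m τ

/-- Raw data of a delayed structured tree: a rooted tree with node set `V`
(given by a parent function and a depth function), a linear order `llt` (`<`)
on its leaves, and for each node `t` a linear order `pre t` (`≺_t`) on the
grandchildren of `t`. -/
structure PreDTree (V : Type*) where
  root : V
  parent : V → V
  depth : V → ℕ
  llt : V → V → Prop
  pre : V → V → V → Prop

namespace PreDTree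

variable {V : Type*} (T : PreDTree V)

/-- `u` is an ancestor of (or equal to) `v`. -/
def anc (u v : V) : Prop := ∃ k : ℕ, T.parent^[k] v = u

/-- `v` is a leaf: it has no proper child. -/
def isLeaf (v : V) : Prop := ∀ u, T.parent u = v → u = v

/-- `u` is a child of `t`. -/
def isChild (u t : V) : Prop := T.parent u = t ∧ u ≠ t

/-- `u` is a grandchild of `t`. -/
def isGrandchild (u t : V) : Prop :=
  T.isChild u (T.parent u) ∧ T.isChild (T.parent u) t

/-- `u` and `v` are (distinct) siblings. -/
def siblings (u v : V) : Prop :=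
  u ≠ v ∧ T.isChild u (T.parent u) ∧ T.isChild v (T.parent v) ∧ T.parent u = T.parent v

/-- The set `L(t)` of leaves below `t`. -/
def leavesBelow (t : V) : Set V := {x | T.isLeaf x ∧ T.anc t x}

/-- The realised order `≺` on the leaves: `x ≺ y` iff `x' ≺_t y'` where `t` is the
closest common ancestor of `x, y` and `x', y'` are the grandchildren of `t`
(lying below distinct children of `t`) above `x, y` respectively. -/
def realLT (x y : V) : Prop :=
  ∃ t x' y', T.isGrandchild x' t ∧ T.isGrandchild y' t ∧ T.parent x' ≠ T.parent y' ∧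
    T.anc x' x ∧ T.anc y' y ∧ T.pre t x' y'

/-- Extension of `≺` to nodes: all leaves below `u` are `≺`-below all leaves below `v`. -/
def nodeLT (u v : V) : Prop :=
  (T.leavesBelow u).Nonempty ∧ (T.leavesBelow v).Nonempty ∧
    ∀ x ∈ T.leavesBelow u, ∀ y ∈ T.leavesBelow v, T.realLT x y

/-- Extension of the leaf order `<` to nodes. -/
def nodeLLT (u v : V) : Prop :=
  (T.leavesBelow u).Nonempty ∧ (T.leavesBelow v).Nonempty ∧
    ∀ x ∈ T.leavesBelow u, ∀ y ∈ T.leavesBelow v, T.llt x y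

/-- The leaf `v` distinguishes the siblings `u, w`: `u ≺ v ≺ w` or `w ≺ v ≺ u`. -/
def distinguishes (v u w : V) : Prop :=
  (T.nodeLT u v ∧ T.nodeLT v w) ∨ (T.nodeLT w v ∧ T.nodeLT v u)

/-- `u` and `w` are indistinguishable: `u = w`, or they are siblings not distinguished
by any leaf outside the leaves below their common parent. -/
def Indist (u w : V) : Prop :=
  u = w ∨ (T.siblings u w ∧
    ∀ v, T.isLeaf v → v ∉ T.leavesBelow (T.parent u) → ¬ T.distinguishes v u w)

/-- The realisation `≺` of the tree is a (strict) linear order on the leaves. -/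
def WellFormed : Prop :=
  (∀ x, ¬ T.realLT x x) ∧
  (∀ x y z, T.realLT x y → T.realLT y z → T.realLT x z) ∧
  (∀ x y, T.isLeaf x → T.isLeaf y → x ≠ y → T.realLT x y ∨ T.realLT y x)

end PreDTree

/-- The axioms of a delayed structured tree: the parent/depth data describe a rooted
tree, `llt` is a linear order on the leaves compatible with the tree, every leaf is an
only child, and each `pre t` is a linear order on the grandchildren of `t`. -/
structure IsDelayedTree {V : Type*} (T : PreDTree V) : Prop where
  parent_root : T.parent T.root = T.root
  depth_root : T.depth T.root = 0
  depth_parent : ∀ v, v ≠ T.root → T.depth (T.parent v) + 1 = T.depth v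
  llt_irrefl : ∀ x, ¬ T.llt x x
  llt_trans : ∀ x y z, T.llt x y → T.llt y z → T.llt x z
  llt_total : ∀ x y, T.isLeaf x → T.isLeaf y → x ≠ y → T.llt x y ∨ T.llt y x
  llt_dom : ∀ x y, T.llt x y → T.isLeaf x ∧ T.isLeaf y
  llt_compatible : ∀ t, ∀ x ∈ T.leavesBelow t, ∀ z ∈ T.leavesBelow t, ∀ y,
    T.llt x y → T.llt y z → y ∈ T.leavesBelow t
  leaf_only_child : ∀ x u, T.isLeaf x → T.isChild u (T.parent x) → u = x
  pre_irrefl : ∀ t x, ¬ T.pre t x x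
  pre_trans : ∀ t x y z, T.pre t x y → T.pre t y z → T.pre t x z
  pre_total : ∀ t x y, T.isGrandchild x t → T.isGrandchild y t → x ≠ y →
    T.pre t x y ∨ T.pre t y x
  pre_dom : ∀ t x y, T.pre t x y → T.isGrandchild x t ∧ T.isGrandchild y t

namespace DSAux
open Classical

variable {V : Type*}

/-- `R` is a strict linear order on the elements of `S`. -/
def LinOn (R : V → V → Prop) (S : Finset V) : Prop :=
  (∀ x ∈ S, ¬ R x x) ∧ (∀ x ∈ S, ∀ y ∈ S, ∀ z ∈ S, R x y → R y z → R x z) ∧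
  (∀ x ∈ S, ∀ y ∈ S, x ≠ y → R x y ∨ R y x)

theorem LinOn.mono {R : V → V → Prop} {S S' : Finset V} (h : LinOn R S) (hsub : S' ⊆ S) :
    LinOn R S' :=
  ⟨fun x hx => h.1 x (hsub hx), fun x hx y hy z hz => h.2.1 x (hsub hx) y (hsub hy) z (hsub hz),
   fun x hx y hy => h.2.2 x (hsub hx) y (hsub hy)⟩

theorem LinOn.asymm {R : V → V → Prop} {S : Finset V} (h : LinOn R S) {x y : V}
    (hx : x ∈ S) (hy : y ∈ S) (hxy : R x y) : ¬ R y x := fun hyx =>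
  h.1 x hx (h.2.1 x hx y hy x hx hxy hyx)

theorem exists_rmin {R : V → V → Prop} (S : Finset V) (h : LinOn R S) (hS : S.Nonempty) :
    ∃ m ∈ S, ∀ b ∈ S, b ≠ m → R m b := by
  classical
  induction S using Finset.induction_on with
  | empty => exact absurd hS (by simp)
  | @insert a S' ha IH =>
    rcases S'.eq_empty_or_nonempty with rfl | hS'
    · exact ⟨a, by simp, by simp⟩
    · obtain ⟨m, hm, hmin⟩ := IH (h.mono (Finset.subset_insert a S')) hS'
      have hamem : a ∈ insert a S' := Finset.mem_insert_self a S'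
      have hmmem : m ∈ insert a S' := Finset.mem_insert_of_mem hm
      have hne : a ≠ m := fun hh => ha (hh ▸ hm)
      rcases h.2.2 a hamem m hmmem hne with ham | hma
      · refine ⟨a, hamem, ?_⟩
        intro b hb hba
        rcases Finset.mem_insert.mp hb with rfl | hb'
        · exact absurd rfl hba
        · rcases eq_or_ne b m with rfl | hbm
          · exact ham
          · exact h.2.1 a hamem m hmmem b (Finset.mem_insert_of_mem hb') ham
              (hmin b hb' hbm)
      · refine ⟨m, hmmem, ?_⟩
        intro b hb hbm
        rcases Finset.mem_insert.mp hb with rfl | hb'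
        · exact hma
        · exact hmin b hb' hbm

theorem exists_sortedList {R : V → V → Prop} (S : Finset V) (h : LinOn R S) :
    ∃ l : List V, l.toFinset = S ∧ l.Nodup ∧ List.Pairwise R l := by
  classical
  induction S using Finset.strongInductionOn with
  | _ S IH =>
    rcases S.eq_empty_or_nonempty with rfl | hS
    · exact ⟨[], by simp⟩
    · obtain ⟨m, hm, hmin⟩ := exists_rmin S h hS
      obtain ⟨l, hl1, hl2, hl3⟩ := IH (S.erase m) (Finset.erase_ssubset hm)
        (h.mono (Finset.erase_subset m S))
      refine ⟨m :: l, ?_, ?_, ?_⟩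
      · simp [hl1, Finset.insert_erase hm]
      · refine List.nodup_cons.mpr ⟨?_, hl2⟩
        intro hmem
        have : m ∈ S.erase m := hl1 ▸ List.mem_toFinset.mpr hmem
        simp at this
      · refine List.pairwise_cons.mpr ⟨?_, hl3⟩
        intro b hb
        have hbS : b ∈ S.erase m := hl1 ▸ List.mem_toFinset.mpr hb
        exact hmin b (Finset.mem_of_mem_erase hbS) (Finset.ne_of_mem_erase hbS)

/-- `e` enumerates `S` in increasing `R`-order. -/
def IsEnum (R : V → V → Prop) (S : Finset V) {n : ℕ} (e : Fin n → V) : Prop :=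
  (∀ i, e i ∈ S) ∧ (∀ x ∈ S, ∃ i, e i = x) ∧ (∀ i j : Fin n, i < j ↔ R (e i) (e j))

theorem IsEnum.irrefl {R : V → V → Prop} {S : Finset V} {n : ℕ} {e : Fin n → V}
    (h : IsEnum R S e) (i : Fin n) : ¬ R (e i) (e i) :=
  fun hr => ((h.2.2 i i).mpr hr).false

theorem IsEnum.inj {R : V → V → Prop} {S : Finset V} {n : ℕ} {e : Fin n → V}
    (h : IsEnum R S e) : Function.Injective e := by
  intro i j hij
  by_contra hne
  rcases lt_or_gt_of_ne hne with hlt | hlt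
  · have := (h.2.2 i j).mp hlt
    rw [hij] at this
    exact h.irrefl j this
  · have := (h.2.2 j i).mp hlt
    rw [hij] at this
    exact h.irrefl j this

theorem IsEnum.card {R : V → V → Prop} {S : Finset V} {n : ℕ} {e : Fin n → V}
    (h : IsEnum R S e) : n = S.card := by
  classical
  have himg : Finset.univ.image e = S := by
    apply Finset.ext
    intro x
    simp only [Finset.mem_image, Finset.mem_univ, true_and]
    exact ⟨fun ⟨i, hi⟩ => hi ▸ h.1 i, fun hx => h.2.1 x hx⟩
  rw [← himg, Finset.card_image_of_injective _ h.inj, Finset.card_univ, Fintype.card_fin]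

theorem exists_isEnum {R : V → V → Prop} (S : Finset V) (h : LinOn R S) :
    ∃ e : Fin S.card → V, IsEnum R S e := by
  classical
  obtain ⟨l, hl1, hl2, hl3⟩ := exists_sortedList S h
  have hlen : l.length = S.card := by rw [← hl1, List.toFinset_card_of_nodup hl2]
  set e : Fin S.card → V := fun i => l.get (Fin.cast hlen.symm i) with he
  have hmem : ∀ i : Fin S.card, e i ∈ S := by
    intro i
    have : l.get (Fin.cast hlen.symm i) ∈ l.toFinset := List.mem_toFinset.mpr (l.get_mem _)
    rw [hl1] at this
    exact this
  refine ⟨e, hmem, ?_, ?_⟩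
  · intro x hx
    have : x ∈ l.toFinset := hl1 ▸ hx
    obtain ⟨i, hi⟩ := List.get_of_mem (List.mem_toFinset.mp this)
    exact ⟨Fin.cast hlen i, hi⟩
  · intro i j
    constructor
    · intro hij
      exact List.pairwise_iff_get.mp hl3 _ _ (by simpa using hij)
    · intro hr
      by_contra hle
      rcases eq_or_lt_of_le (not_lt.mp hle) with heq | hlt
      · cases heq
        exact h.1 _ (hmem i) hr
      · have hr' := List.pairwise_iff_get.mp hl3 _ _
          (show Fin.cast hlen.symm j < Fin.cast hlen.symm i by simpa using hlt)
        exact h.asymm (hmem j) (hmem i) hr' hr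

theorem strictMono_bij_fin_id {n : ℕ} {f : Fin n → Fin n} (hmono : StrictMono f) :
    ∀ i, f i = i := by
  haveI : WellFoundedLT (Fin n) := ⟨Finite.wellFounded_of_trans_of_irrefl _⟩
  intro i
  have hbij : Function.Bijective f := Finite.injective_iff_bijective.mp hmono.injective
  have hle : ∀ k : Fin n, k ≤ f k := fun k => hmono.le_apply
  obtain ⟨ψ, hψl, hψr⟩ := Function.bijective_iff_has_inverse.mp hbij
  have hψmono : StrictMono ψ := by
    intro a b hab
    rcases lt_trichotomy (ψ a) (ψ b) with hh | hh | hh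
    · exact hh
    · exact absurd (congrArg f hh) (by rw [hψr a, hψr b]; exact fun hc => hab.ne hc)
    · exact absurd (hmono hh) (by rw [hψr a, hψr b]; exact fun hc => (lt_asymm hab) hc)
  have hle' : ∀ k : Fin n, k ≤ ψ k := fun k => hψmono.le_apply
  have h1 : f i ≤ ψ (f i) := hle' (f i)
  rw [hψl i] at h1
  exact le_antisymm h1 (hle i)

theorem IsEnum.unique {R : V → V → Prop} {S : Finset V} {n : ℕ} {e e' : Fin n → V}
    (h : IsEnum R S e) (h' : IsEnum R S e') : e = e' := by
  classical
  have hφ : ∀ i : Fin n, ∃ j, e' j = e i := fun i => h'.2.1 (e i) (h.1 i)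
  have hφs : ∀ i, e' ((hφ i).choose) = e i := fun i => (hφ i).choose_spec
  have hmono : StrictMono (fun i => (hφ i).choose) := by
    intro i j hij
    have : R (e i) (e j) := (h.2.2 i j).mp hij
    rw [← hφs i, ← hφs j] at this
    exact (h'.2.2 _ _).mpr this
  funext i
  rw [← hφs i, strictMono_bij_fin_id hmono i]

theorem perm_eq_of_iff {n : ℕ} (f g : Equiv.Perm (Fin n))
    (h : ∀ i j, f i < f j ↔ g i < g j) : f = g := by
  have hmono : StrictMono (fun a => f (g.symm a)) := by
    intro a b hab
    have hg : g (g.symm a) < g (g.symm b) := by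
      rw [Equiv.apply_symm_apply, Equiv.apply_symm_apply]; exact hab
    exact (h _ _).mpr hg
  apply Equiv.ext
  intro i
  have := strictMono_bij_fin_id hmono (g i)
  simpa using this

end DSAux
namespace DSAux
open Classical

variable {V : Type*}

theorem biorder_iff {P Q : V → V → Prop} {S : Finset V} {n : ℕ} {ρ : Equiv.Perm (Fin n)} :
    BiorderPerm P Q ↑S ρ ↔
      ∃ e : Fin n → V, IsEnum P S e ∧ ∀ i j, ρ i < ρ j ↔ Q (e i) (e j) := by
  constructor
  · rintro ⟨e, h1, h2, h3, h4⟩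
    exact ⟨e, ⟨fun i => by simpa using h1 i, fun x hx => h2 x (by simpa using hx), h3⟩, h4⟩
  · rintro ⟨e, ⟨h1, h2, h3⟩, h4⟩
    exact ⟨e, fun i => by simpa using h1 i, fun x hx => h2 x (by simpa using hx), h3, h4⟩

theorem linOn_of_enum {P : V → V → Prop} {S : Finset V} {n : ℕ} {e : Fin n → V}
    (h : IsEnum P S e) : LinOn P S := by
  refine ⟨?_, ?_, ?_⟩
  · intro x hx
    obtain ⟨i, rfl⟩ := h.2.1 x hx
    exact h.irrefl i
  · intro x hx y hy z hz hxy hyz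
    obtain ⟨i, rfl⟩ := h.2.1 x hx
    obtain ⟨j, rfl⟩ := h.2.1 y hy
    obtain ⟨k, rfl⟩ := h.2.1 z hz
    exact (h.2.2 i k).mp (lt_trans ((h.2.2 i j).mpr hxy) ((h.2.2 j k).mpr hyz))
  · intro x hx y hy hne
    obtain ⟨i, rfl⟩ := h.2.1 x hx
    obtain ⟨j, rfl⟩ := h.2.1 y hy
    rcases lt_trichotomy i j with hij | hij | hij
    · exact Or.inl ((h.2.2 i j).mp hij)
    · exact absurd (congrArg e hij) hne
    · exact Or.inr ((h.2.2 j i).mp hij)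

theorem linOn_of_biorder {P Q : V → V → Prop} {S : Finset V} {n : ℕ} {ρ : Equiv.Perm (Fin n)}
    (h : BiorderPerm P Q ↑S ρ) : LinOn P S ∧ LinOn Q S := by
  obtain ⟨e, he, hq⟩ := biorder_iff.mp h
  refine ⟨linOn_of_enum he, ?_, ?_, ?_⟩
  · intro x hx
    obtain ⟨i, rfl⟩ := he.2.1 x hx
    exact fun hr => ((hq i i).mpr hr).false
  · intro x hx y hy z hz hxy hyz
    obtain ⟨i, rfl⟩ := he.2.1 x hx
    obtain ⟨j, rfl⟩ := he.2.1 y hy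
    obtain ⟨k, rfl⟩ := he.2.1 z hz
    exact (hq i k).mp (lt_trans ((hq i j).mpr hxy) ((hq j k).mpr hyz))
  · intro x hx y hy hne
    obtain ⟨i, rfl⟩ := he.2.1 x hx
    obtain ⟨j, rfl⟩ := he.2.1 y hy
    have hij : i ≠ j := fun hh => hne (congrArg e hh)
    rcases lt_trichotomy (ρ i) (ρ j) with hh | hh | hh
    · exact Or.inl ((hq i j).mp hh)
    · exact absurd (ρ.injective hh) hij
    · exact Or.inr ((hq j i).mp hh)

theorem exists_biorder {P Q : V → V → Prop} {S : Finset V} (hP : LinOn P S) (hQ : LinOn Q S) :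
    ∃ ρ : Equiv.Perm (Fin S.card), BiorderPerm P Q ↑S ρ := by
  obtain ⟨eP, heP⟩ := exists_isEnum S hP
  obtain ⟨eQ, heQ⟩ := exists_isEnum S hQ
  have hφ : ∀ i, ∃ j, eQ j = eP i := fun i => heQ.2.1 (eP i) (heP.1 i)
  have hφs : ∀ i, eQ ((hφ i).choose) = eP i := fun i => (hφ i).choose_spec
  have hinj : Function.Injective (fun i => (hφ i).choose) := by
    intro a b hab
    apply heP.inj
    rw [← hφs a, ← hφs b]
    exact congrArg eQ hab
  have hbij := Finite.injective_iff_bijective.mp hinj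
  refine ⟨Equiv.ofBijective _ hbij, ?_⟩
  rw [biorder_iff]
  refine ⟨eP, heP, ?_⟩
  intro i j
  have h1 : Equiv.ofBijective _ hbij i = (hφ i).choose := rfl
  have h2 : Equiv.ofBijective _ hbij j = (hφ j).choose := rfl
  rw [h1, h2, heQ.2.2, hφs, hφs]

theorem biorder_card {P Q : V → V → Prop} {S : Finset V} {n : ℕ} {ρ : Equiv.Perm (Fin n)}
    (h : BiorderPerm P Q ↑S ρ) : n = S.card := by
  obtain ⟨e, he, _⟩ := biorder_iff.mp h
  exact he.card

theorem biorder_unique {P Q : V → V → Prop} {S : Finset V} {n : ℕ} {ρ ρ' : Equiv.Perm (Fin n)}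
    (h : BiorderPerm P Q ↑S ρ) (h' : BiorderPerm P Q ↑S ρ') : ρ = ρ' := by
  obtain ⟨e, he, hq⟩ := biorder_iff.mp h
  obtain ⟨e', he', hq'⟩ := biorder_iff.mp h'
  have : e = e' := he.unique he'
  subst this
  exact perm_eq_of_iff ρ ρ' (fun i j => (hq i j).trans (hq' i j).symm)

theorem fun_eq_perm_of_iff {n : ℕ} (f : Fin n → Fin n) (g : Equiv.Perm (Fin n))
    (h : ∀ i j, f i < f j ↔ g i < g j) : ∀ i, f i = g i := by
  intro i
  have hmono : StrictMono (fun a => f (g.symm a)) := by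
    intro a b hab
    have hg : g (g.symm a) < g (g.symm b) := by
      rw [Equiv.apply_symm_apply, Equiv.apply_symm_apply]; exact hab
    exact (h _ _).mpr hg
  have := strictMono_bij_fin_id hmono (g i)
  simpa using this

theorem biorder_comp {P Q R : V → V → Prop} {S : Finset V} {n : ℕ}
    {ρa ρb : Equiv.Perm (Fin n)}
    (ha : BiorderPerm P Q ↑S ρa) (hb : BiorderPerm Q R ↑S ρb) :
    BiorderPerm P R ↑S (ρb * ρa) := by
  obtain ⟨ea, hea, hqa⟩ := biorder_iff.mp ha
  obtain ⟨eb, heb, hrb⟩ := biorder_iff.mp hb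
  -- the map i ↦ index of ea i in eb equals ρa
  have hφ : ∀ i, ∃ j, eb j = ea i := fun i => heb.2.1 (ea i) (hea.1 i)
  have hφs : ∀ i, eb ((hφ i).choose) = ea i := fun i => (hφ i).choose_spec
  have hinj : Function.Injective (fun i => (hφ i).choose) := by
    intro a b hab
    apply hea.inj
    rw [← hφs a, ← hφs b]
    exact congrArg eb hab
  have hiff : ∀ i j, (hφ i).choose < (hφ j).choose ↔ ρa i < ρa j := by
    intro i j
    rw [heb.2.2 ((hφ i).choose) ((hφ j).choose), hφs, hφs, ← hqa]
  have hphi : ∀ i, (hφ i).choose = ρa i :=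
    fun_eq_perm_of_iff _ ρa hiff
  rw [biorder_iff]
  refine ⟨ea, hea, ?_⟩
  intro i j
  have : (ρb * ρa) i < (ρb * ρa) j ↔ R (eb (ρa i)) (eb (ρa j)) := hrb (ρa i) (ρa j)
  rw [this, ← hphi i, ← hphi j, hφs, hφs]

end DSAux
namespace DSAux
open Classical

variable {V : Type*}

/-- There is a permutation in `C` realising the biorder `(P, Q)` on `S`. -/
def CGood (C : PermClass) (P Q : V → V → Prop) (S : Finset V) : Prop :=
  ∃ (n : ℕ) (ρ : Equiv.Perm (Fin n)), BiorderPerm P Q ↑S ρ ∧ C n ρ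

theorem CGood_congr {C : PermClass} {P Q P' Q' : V → V → Prop} {S : Finset V}
    (hP : ∀ x ∈ S, ∀ y ∈ S, (P x y ↔ P' x y)) (hQ : ∀ x ∈ S, ∀ y ∈ S, (Q x y ↔ Q' x y))
    (h : CGood C P Q S) : CGood C P' Q' S := by
  obtain ⟨n, ρ, hb, hC⟩ := h
  obtain ⟨e, he, hq⟩ := biorder_iff.mp hb
  refine ⟨n, ρ, biorder_iff.mpr ⟨e, ⟨he.1, he.2.1, ?_⟩, ?_⟩, hC⟩
  · intro i j
    rw [he.2.2, hP _ (he.1 i) _ (he.1 j)]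
  · intro i j
    rw [hq, hQ _ (he.1 i) _ (he.1 j)]

theorem CGood_empty {C : PermClass} {P Q : V → V → Prop} (hC0 : C 0 1) :
    CGood C P Q (∅ : Finset V) := by
  refine ⟨0, 1, ⟨Fin.elim0, ?_, ?_, ?_, ?_⟩, hC0⟩
  · exact fun i => i.elim0
  · intro x hx; simp at hx
  · exact fun i => i.elim0
  · exact fun i => i.elim0

theorem CGood_singleton {C : PermClass} {P Q : V → V → Prop} {x : V} (hC1 : C 1 1)
    (hP : ¬ P x x) (hQ : ¬ Q x x) : CGood C P Q ({x} : Finset V) := by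
  refine ⟨1, 1, ⟨fun _ => x, fun i => by simp, ?_, ?_, ?_⟩, hC1⟩
  · intro y hy
    refine ⟨0, ?_⟩
    have : y = x := by simpa using hy
    exact this.symm
  · intro i j
    rw [Subsingleton.elim i j]
    simp only [lt_self_iff_false, false_iff]
    exact hP
  · intro i j
    rw [Subsingleton.elim i j]
    simp only [lt_self_iff_false, false_iff]
    simpa using hQ

theorem CGood_set_congr {C : PermClass} {P Q : V → V → Prop} {S S' : Finset V}
    (hSS : S = S') (h : CGood C P Q S) : CGood C P Q S' := hSS ▸ h

theorem CGood_symm {C : PermClass} (hinv : ClosedUnderInverse C)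
    {P Q : V → V → Prop} {S : Finset V} (h : CGood C P Q S) : CGood C Q P S := by
  obtain ⟨n, ρ, hb, hC⟩ := h
  obtain ⟨e, he, hq⟩ := biorder_iff.mp hb
  refine ⟨n, ρ⁻¹, biorder_iff.mpr ⟨e ∘ ⇑ρ⁻¹, ⟨fun i => he.1 _, ?_, ?_⟩, ?_⟩, hinv n ρ hC⟩
  · intro x hx
    obtain ⟨i, rfl⟩ := he.2.1 x hx
    exact ⟨ρ i, by simp⟩
  · intro i j
    have := hq (ρ⁻¹ i) (ρ⁻¹ j)
    simpa using this
  · intro i j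
    exact he.2.2 (ρ⁻¹ i) (ρ⁻¹ j)

theorem CGood_subset {C : PermClass} (hpat : ClosedUnderPatterns C)
    {P Q : V → V → Prop} {S S' : Finset V} (hsub : S' ⊆ S) (h : CGood C P Q S) :
    CGood C P Q S' := by
  classical
  obtain ⟨n, ρ, hb, hC⟩ := h
  obtain ⟨e, he, hq⟩ := biorder_iff.mp hb
  set I : Finset (Fin n) := Finset.univ.filter (fun i => e i ∈ S') with hI
  set p := I.card with hp
  set f : Fin p ↪o Fin n := I.orderEmbOfFin rfl with hf
  have hfI : ∀ i, f i ∈ I := fun i => I.orderEmbOfFin_mem rfl i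
  have hfmem : ∀ i : Fin p, e (f i) ∈ S' := by
    intro i
    have := hfI i
    rw [hI] at this
    exact (Finset.mem_filter.mp this).2
  have hef : IsEnum P S' (e ∘ f) := by
    refine ⟨hfmem, ?_, ?_⟩
    · intro x hx
      obtain ⟨i, rfl⟩ := he.2.1 x (hsub hx)
      have hiI : i ∈ I := by rw [hI]; exact Finset.mem_filter.mpr ⟨Finset.mem_univ i, hx⟩
      have : i ∈ Set.range f := by rw [Finset.range_orderEmbOfFin]; exact hiI
      obtain ⟨j, rfl⟩ := this
      exact ⟨j, rfl⟩
    · intro i j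
      constructor
      · intro hij
        exact (he.2.2 (f i) (f j)).mp (f.strictMono hij)
      · intro hr
        have := (he.2.2 (f i) (f j)).mpr hr
        exact f.strictMono.lt_iff_lt.mp this
  -- get a Q-sorted enumeration of S' as well, of length p
  have hpcard : p = S'.card := hef.card
  have hQlin : LinOn Q S' := (linOn_of_biorder hb).2.mono hsub
  have hPlin : LinOn P S' := (linOn_of_biorder hb).1.mono hsub
  obtain ⟨ρ', hb'⟩ := exists_biorder hPlin hQlin
  obtain ⟨e'', he'', hq''⟩ := biorder_iff.mp hb'
  -- transport ρ' to length p
  refine ⟨S'.card, ρ', hb', ?_⟩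
  -- pattern embedding : the P-sorted enum of S' is e ∘ f (after cast)
  have hcast : S'.card = p := hpcard.symm
  -- define g : Fin S'.card → Fin n
  set g : Fin S'.card → Fin n := fun i => f (Fin.cast hcast i) with hg
  have hgmono : StrictMono g := by
    intro a b hab
    exact f.strictMono (by simpa using hab)
  have hee : ∀ i : Fin S'.card, e'' i = e (g i) := by
    have : IsEnum P S' (fun i : Fin S'.card => e (g i)) := by
      refine ⟨fun i => hfmem _, ?_, ?_⟩
      · intro x hx
        obtain ⟨j, hj⟩ := hef.2.1 x hx
        exact ⟨Fin.cast hcast.symm j, by simpa [hg] using hj⟩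
      · intro i j
        have := hef.2.2 (Fin.cast hcast i) (Fin.cast hcast j)
        simpa [hg] using this
    have := he''.unique this
    intro i
    rw [this]
  apply hpat S'.card n ρ' ρ _ hC
  refine ⟨g, hgmono, ?_⟩
  intro i j
  rw [hq'' i j, hee i, hee j, ← hq (g i) (g j)]

theorem linOn_of_blocks {P : V → V → Prop} {m : ℕ} {B : Fin m → Finset V} {S : Finset V}
    (hS : ∀ x, x ∈ S ↔ ∃ i, x ∈ B i)
    (hdisj : ∀ i j, i ≠ j → ∀ x, x ∈ B i → x ∉ B j)
    (hloc : ∀ i, LinOn P (B i))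
    (ι : Fin m → Fin m) (hι : Function.Injective ι)
    (hc : ∀ i j, i ≠ j → ∀ x ∈ B i, ∀ y ∈ B j, (P x y ↔ ι i < ι j)) : LinOn P S := by
  have hmem : ∀ x ∈ S, ∃ i, x ∈ B i := fun x hx => (hS x).mp hx
  refine ⟨?_, ?_, ?_⟩
  · intro x hx
    obtain ⟨i, hi⟩ := hmem x hx
    exact (hloc i).1 x hi
  · intro x hx y hy z hz hxy hyz
    obtain ⟨i, hi⟩ := hmem x hx
    obtain ⟨j, hj⟩ := hmem y hy
    obtain ⟨k, hk⟩ := hmem z hz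
    by_cases hij : i = j
    · subst hij
      by_cases hik : i = k
      · subst hik
        exact (hloc i).2.1 x hi y hj z hk hxy hyz
      · have h2 := (hc i k hik y hj z hk).mp hyz
        exact (hc i k hik x hi z hk).mpr h2
    · by_cases hjk : j = k
      · subst hjk
        have h1 := (hc i j hij x hi y hj).mp hxy
        exact (hc i j hij x hi z hk).mpr h1
      · have h1 := (hc i j hij x hi y hj).mp hxy
        have h2 := (hc j k hjk y hj z hk).mp hyz
        by_cases hik : i = k
        · subst hik
          exact absurd (lt_trans h1 h2) (lt_irrefl _)
        · exact (hc i k hik x hi z hk).mpr (lt_trans h1 h2)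
  · intro x hx y hy hne
    obtain ⟨i, hi⟩ := hmem x hx
    obtain ⟨j, hj⟩ := hmem y hy
    by_cases hij : i = j
    · subst hij
      exact (hloc i).2.2 x hi y hj hne
    · rcases lt_or_gt_of_ne (fun hh => hij (hι hh)) with hh | hh
      · exact Or.inl ((hc i j hij x hi y hj).mpr hh)
      · exact Or.inr ((hc j i (Ne.symm hij) y hj x hi).mpr hh)

theorem CGood_glue (C : PermClass) (hsub : ClosedUnderSubstitution C)
    {P Q : V → V → Prop} {m : ℕ} (B : Fin m → Finset V) (S : Finset V)
    (hS : ∀ x, x ∈ S ↔ ∃ i, x ∈ B i)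
    (hdisj : ∀ i j, i ≠ j → ∀ x, x ∈ B i → x ∉ B j)
    (hne : ∀ i, (B i).Nonempty)
    (τ : Equiv.Perm (Fin m)) (hτ : C m τ)
    (hPc : ∀ i j, i ≠ j → ∀ x ∈ B i, ∀ y ∈ B j, (P x y ↔ i < j))
    (hQc : ∀ i j, i ≠ j → ∀ x ∈ B i, ∀ y ∈ B j, (Q x y ↔ τ i < τ j))
    (hgood : ∀ i, CGood C P Q (B i)) :
    CGood C P Q S := by
  classical
  choose ns ρblk hbblk hCblk using hgood
  have hblkenum : ∀ i, ∃ e : Fin (ns i) → V,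
      IsEnum P (B i) e ∧ ∀ a b, ρblk i a < ρblk i b ↔ Q (e a) (e b) :=
    fun i => biorder_iff.mp (hbblk i)
  choose eblk heblk hqblk using hblkenum
  have hlocP : ∀ i, LinOn P (B i) := fun i => (linOn_of_biorder (hbblk i)).1
  have hlocQ : ∀ i, LinOn Q (B i) := fun i => (linOn_of_biorder (hbblk i)).2
  have hPlin : LinOn P S := linOn_of_blocks hS hdisj hlocP id (fun _ _ h => h) hPc
  have hQlin : LinOn Q S := linOn_of_blocks hS hdisj hlocQ τ τ.injective hQc
  obtain ⟨ρ, hb⟩ := exists_biorder hPlin hQlin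
  obtain ⟨eP, heP, hqP⟩ := biorder_iff.mp hb
  refine ⟨S.card, ρ, hb, ?_⟩
  -- block index function
  have hbx : ∀ k : Fin S.card, ∃ i, eP k ∈ B i := fun k => (hS _).mp (heP.1 k)
  set g : Fin S.card → Fin m := fun k => (hbx k).choose with hgdef
  have hgs : ∀ k, eP k ∈ B (g k) := fun k => (hbx k).choose_spec
  have hguniq : ∀ k i, eP k ∈ B i → g k = i := by
    intro k i hk
    by_contra hne'
    exact hdisj (g k) i hne' (eP k) (hgs k) hk
  apply hsub m τ ns ρblk S.card ρ hτ hCblk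
  refine ⟨g, ?_, ?_, ?_, ?_⟩
  · -- monotone
    intro k l hkl
    rcases eq_or_lt_of_le hkl with rfl | hkl'
    · exact le_refl _
    · by_cases hgg : g k = g l
      · exact le_of_eq hgg
      · have hp : P (eP k) (eP l) := (heP.2.2 k l).mp hkl'
        exact le_of_lt ((hPc (g k) (g l) hgg (eP k) (hgs k) (eP l) (hgs l)).mp hp)
  · -- surjective
    intro i
    obtain ⟨x, hx⟩ := hne i
    obtain ⟨k, rfl⟩ := heP.2.1 x ((hS x).mpr ⟨i, hx⟩)
    exact ⟨k, hguniq k i hx⟩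
  · -- blocks
    intro i
    have hκ : ∀ a : Fin (ns i), ∃ k, eP k = eblk i a :=
      fun a => heP.2.1 (eblk i a) ((hS _).mpr ⟨i, (heblk i).1 a⟩)
    refine ⟨fun a => (hκ a).choose, ?_, ?_, ?_, ?_⟩
    · intro a
      have : eP ((hκ a).choose) = eblk i a := (hκ a).choose_spec
      exact hguniq _ i (this ▸ (heblk i).1 a)
    · intro k hk
      have hki : eP k ∈ B i := by
        have : g k = i := hk
        exact this ▸ hgs k
      obtain ⟨a, ha⟩ := (heblk i).2.1 (eP k) hki
      refine ⟨a, ?_⟩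
      apply heP.inj
      rw [(hκ a).choose_spec, ha]
    · intro a b
      constructor
      · intro hab
        have hp : P (eblk i a) (eblk i b) := ((heblk i).2.2 a b).mp hab
        rw [← (hκ a).choose_spec, ← (hκ b).choose_spec] at hp
        exact (heP.2.2 _ _).mpr hp
      · intro hab
        have hp := (heP.2.2 _ _).mp hab
        rw [(hκ a).choose_spec, (hκ b).choose_spec] at hp
        exact ((heblk i).2.2 a b).mpr hp
    · intro a b
      constructor
      · intro hab
        have hqq := (hqblk i a b).mp hab
        rw [← (hκ a).choose_spec, ← (hκ b).choose_spec] at hqq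
        exact (hqP _ _).mpr hqq
      · intro hab
        have hqq := (hqP _ _).mp hab
        rw [(hκ a).choose_spec, (hκ b).choose_spec] at hqq
        exact (hqblk i a b).mpr hqq
  · -- cross
    intro x y hxy
    rw [hqP x y]
    exact hQc (g x) (g y) hxy (eP x) (hgs x) (eP y) (hgs y)

end DSAux
namespace DSTree
open Classical DSAux

variable {V : Type*} [Fintype V] {T : PreDTree V}

/-! ### Basic tree lemmas -/

theorem eq_root_of_depth_zero (hT : IsDelayedTree T) {v : V} (h : T.depth v = 0) :
    v = T.root := by
  by_contra hv
  have := hT.depth_parent v hv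
  omega

theorem depth_pos (hT : IsDelayedTree T) {v : V} (h : v ≠ T.root) : 1 ≤ T.depth v := by
  have := hT.depth_parent v h
  omega

theorem iter_parent_root (hT : IsDelayedTree T) (k : ℕ) : T.parent^[k] T.root = T.root := by
  induction k with
  | zero => rfl
  | succ k IH => rw [Function.iterate_succ_apply', IH, hT.parent_root]

theorem depth_iter (hT : IsDelayedTree T) :
    ∀ (k : ℕ) (v : V), k ≤ T.depth v → T.depth (T.parent^[k] v) = T.depth v - k := by
  intro k
  induction k with
  | zero => intro v _; simp
  | succ k IH =>
    intro v hk
    have hvroot : v ≠ T.root := by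
      intro h; rw [h, hT.depth_root] at hk; omega
    have hdp := hT.depth_parent v hvroot
    rw [Function.iterate_succ_apply]
    rw [IH (T.parent v) (by omega)]
    omega

theorem iter_parent_of_ge (hT : IsDelayedTree T) :
    ∀ (k : ℕ) (v : V), T.depth v ≤ k → T.parent^[k] v = T.root := by
  intro k
  induction k with
  | zero =>
    intro v hv
    exact eq_root_of_depth_zero hT (Nat.le_zero.mp hv)
  | succ k IH =>
    intro v hv
    by_cases hvr : v = T.root
    · rw [hvr]; exact iter_parent_root hT _
    · have hdp := hT.depth_parent v hvr
      rw [Function.iterate_succ_apply]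
      exact IH (T.parent v) (by omega)

theorem anc_refl (u : V) : T.anc u u := ⟨0, rfl⟩

theorem anc_trans {u v w : V} (h1 : T.anc u v) (h2 : T.anc v w) : T.anc u w := by
  obtain ⟨k, hk⟩ := h1
  obtain ⟨l, hl⟩ := h2
  exact ⟨k + l, by rw [Function.iterate_add_apply, hl, hk]⟩

theorem anc_root (hT : IsDelayedTree T) (v : V) : T.anc T.root v :=
  ⟨T.depth v, iter_parent_of_ge hT _ _ le_rfl⟩

theorem anc_parent (u : V) : T.anc (T.parent u) u := ⟨1, rfl⟩

theorem anc_depth_le (hT : IsDelayedTree T) {u v : V} (h : T.anc u v) :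
    T.depth u ≤ T.depth v := by
  obtain ⟨k, hk⟩ := h
  by_cases hkd : k ≤ T.depth v
  · rw [← hk, depth_iter hT k v hkd]; omega
  · rw [← hk, iter_parent_of_ge hT k v (by omega), hT.depth_root]; omega

theorem anc_canonical (hT : IsDelayedTree T) {u v : V} (h : T.anc u v) :
    T.parent^[T.depth v - T.depth u] v = u := by
  obtain ⟨k, hk⟩ := h
  by_cases hkd : k ≤ T.depth v
  · have hd : T.depth u = T.depth v - k := by rw [← hk, depth_iter hT k v hkd]
    have : T.depth v - T.depth u = k := by omega
    rw [this, hk]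
  · have hu : u = T.root := by rw [← hk, iter_parent_of_ge hT k v (by omega)]
    subst hu
    rw [hT.depth_root]
    exact iter_parent_of_ge hT _ _ (by omega)

theorem anc_antisymm (hT : IsDelayedTree T) {u v : V} (h1 : T.anc u v) (h2 : T.anc v u) :
    u = v := by
  have hd1 := anc_depth_le hT h1
  have hd2 := anc_depth_le hT h2
  have := anc_canonical hT h1
  rw [show T.depth v - T.depth u = 0 by omega] at this
  exact this.symm

theorem anc_at_depth_unique (hT : IsDelayedTree T) {u w v : V} (h1 : T.anc u v)
    (h2 : T.anc w v) (hd : T.depth u = T.depth w) : u = w := by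
  have := anc_canonical hT h1
  have h2' := anc_canonical hT h2
  rw [← hd] at h2'
  rw [← this, ← h2']

theorem anc_comparable (hT : IsDelayedTree T) {u w x : V} (h1 : T.anc u x) (h2 : T.anc w x)
    (hd : T.depth u ≤ T.depth w) : T.anc u w := by
  have hwx := anc_depth_le hT h2
  have hcu := anc_canonical hT h1
  have hcw := anc_canonical hT h2
  refine ⟨T.depth w - T.depth u, ?_⟩
  have h3 : T.parent^[T.depth w - T.depth u] (T.parent^[T.depth x - T.depth w] x) = u := by
    rw [← Function.iterate_add_apply,
      show T.depth w - T.depth u + (T.depth x - T.depth w) = T.depth x - T.depth u from by omega]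
    exact hcu
  rw [hcw] at h3
  exact h3

theorem leaf_anc (hx : T.isLeaf x) : ∀ {k : ℕ} {y : V}, T.parent^[k] y = x → y = x := by
  intro k
  induction k with
  | zero => intro y h; exact h
  | succ k IH =>
    intro y h
    rw [Function.iterate_succ_apply'] at h
    have := hx _ h
    exact IH this

theorem leaf_anc' (hx : T.isLeaf x) (h : T.anc x y) : y = x := by
  obtain ⟨k, hk⟩ := h
  exact leaf_anc hx hk

/-! ### chUp and gcUp -/

/-- The child of `t` on the way to `x`. -/
noncomputable def chUp (T : PreDTree V) (t x : V) : V :=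
  T.parent^[T.depth x - T.depth t - 1] x

/-- The grandchild of `t` on the way to `x`. -/
noncomputable def gcUp (T : PreDTree V) (t x : V) : V :=
  T.parent^[T.depth x - T.depth t - 2] x

theorem anc_chUp (t x : V) : T.anc (chUp T t x) x := ⟨_, rfl⟩

theorem anc_gcUp (t x : V) : T.anc (gcUp T t x) x := ⟨_, rfl⟩

theorem depth_chUp (hT : IsDelayedTree T) {t x : V} (hd : T.depth t + 1 ≤ T.depth x) :
    T.depth (chUp T t x) = T.depth t + 1 := by
  rw [chUp, depth_iter hT _ _ (by omega)]; omega

theorem depth_gcUp (hT : IsDelayedTree T) {t x : V} (hd : T.depth t + 2 ≤ T.depth x) :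
    T.depth (gcUp T t x) = T.depth t + 2 := by
  rw [gcUp, depth_iter hT _ _ (by omega)]; omega

theorem parent_chUp (hT : IsDelayedTree T) {t x : V} (ha : T.anc t x)
    (hd : T.depth t + 1 ≤ T.depth x) : T.parent (chUp T t x) = t := by
  have h0 := anc_canonical hT ha
  have h1 : T.parent (T.parent^[T.depth x - T.depth t - 1] x)
      = T.parent^[(T.depth x - T.depth t - 1) + 1] x :=
    (Function.iterate_succ_apply' _ _ _).symm
  rw [chUp, h1, show (T.depth x - T.depth t - 1) + 1 = T.depth x - T.depth t from by omega]
  exact h0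

theorem parent_gcUp (hT : IsDelayedTree T) {t x : V} (ha : T.anc t x)
    (hd : T.depth t + 2 ≤ T.depth x) : T.parent (gcUp T t x) = chUp T t x := by
  have h1 : T.parent (T.parent^[T.depth x - T.depth t - 2] x)
      = T.parent^[(T.depth x - T.depth t - 2) + 1] x :=
    (Function.iterate_succ_apply' _ _ _).symm
  rw [gcUp, chUp, h1, show (T.depth x - T.depth t - 2) + 1 = T.depth x - T.depth t - 1 from by omega]

theorem isChild_chUp (hT : IsDelayedTree T) {t x : V} (ha : T.anc t x)
    (hd : T.depth t + 1 ≤ T.depth x) : T.isChild (chUp T t x) t := by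
  refine ⟨parent_chUp hT ha hd, ?_⟩
  intro h
  have := depth_chUp hT hd
  rw [h] at this
  omega

theorem isGrandchild_gcUp (hT : IsDelayedTree T) {t x : V} (ha : T.anc t x)
    (hd : T.depth t + 2 ≤ T.depth x) : T.isGrandchild (gcUp T t x) t := by
  have hp := parent_gcUp hT ha hd
  have hdg := depth_gcUp hT hd
  have hdc := depth_chUp hT (t := t) (x := x) (by omega)
  constructor
  · refine ⟨rfl, ?_⟩
    intro h
    rw [hp] at h
    rw [← h] at hdc
    omega
  · rw [hp]
    exact isChild_chUp hT ha (by omega)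

theorem depth_child (hT : IsDelayedTree T) {u t : V} (h : T.isChild u t) :
    T.depth u = T.depth t + 1 := by
  have hur : u ≠ T.root := by
    intro hu
    have ht : t = T.root := by rw [← h.1, hu, hT.parent_root]
    exact h.2 (by rw [hu, ht])
  have := hT.depth_parent u hur
  rw [h.1] at this
  omega

theorem depth_gc (hT : IsDelayedTree T) {w t : V} (h : T.isGrandchild w t) :
    T.depth w = T.depth t + 2 := by
  have h1 := depth_child hT h.1
  have h2 := depth_child hT h.2
  omega

theorem anc_of_child {u t : V} (h : T.isChild u t) : T.anc t u := by
  rw [← h.1]; exact anc_parent u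

theorem anc_of_gc {w t : V} (h : T.isGrandchild w t) : T.anc t w := by
  have := anc_of_child h.1
  have h2 := anc_of_child h.2
  exact anc_trans h2 this

theorem chUp_eq_of_anc (hT : IsDelayedTree T) {t u x : V} (ht : T.anc t x)
    (hu : T.isChild u t) (hux : T.anc u x) : chUp T t x = u := by
  have hdu := depth_child hT hu
  have hdx := anc_depth_le hT hux
  exact anc_at_depth_unique hT (anc_chUp t x) hux (by rw [depth_chUp hT (by omega), hdu])

theorem gcUp_eq_of_anc (hT : IsDelayedTree T) {t w x : V} (hw : T.isGrandchild w t)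
    (hwx : T.anc w x) : gcUp T t x = w := by
  have hdw := depth_gc hT hw
  have hdx := anc_depth_le hT hwx
  exact anc_at_depth_unique hT (anc_gcUp t x) hwx (by rw [depth_gcUp hT (by omega), hdw])

/-! ### Leaves below -/

/-- The finset of leaves below `t`. -/
noncomputable def lbF (T : PreDTree V) [Fintype V] (t : V) : Finset V :=
  Finset.univ.filter (fun x => T.isLeaf x ∧ T.anc t x)

theorem mem_lbF {t x : V} : x ∈ lbF T t ↔ T.isLeaf x ∧ T.anc t x := by
  simp [lbF]

theorem lbF_coe (t : V) : (↑(lbF T t) : Set V) = T.leavesBelow t := by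
  ext x
  simp [lbF, PreDTree.leavesBelow]

/-- number of strict descendants, for termination -/
noncomputable def descC (T : PreDTree V) [Fintype V] (t : V) : ℕ :=
  (Finset.univ.filter (fun w => T.anc t w ∧ w ≠ t)).card

theorem descC_lt (hT : IsDelayedTree T) {t w : V} (h : T.anc t w) (hne : w ≠ t) :
    descC T w < descC T t := by
  apply Finset.card_lt_card
  constructor
  · intro z hz
    simp only [descC, Finset.mem_filter, Finset.mem_univ, true_and] at hz ⊢
    refine ⟨anc_trans h hz.1, ?_⟩
    intro hzt
    subst hzt
    exact hne (anc_antisymm hT hz.1 h)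
  · intro hsub
    have : w ∈ Finset.univ.filter (fun z => T.anc t z ∧ z ≠ t) := by
      simp only [Finset.mem_filter, Finset.mem_univ, true_and]
      exact ⟨h, hne⟩
    have hw := hsub this
    simp only [Finset.mem_filter, Finset.mem_univ, true_and] at hw
    exact hw.2 rfl

theorem not_leaf_child (hT : IsDelayedTree T) {t : V} (h : ¬ T.isLeaf t) :
    ∃ u, T.isChild u t := by
  rw [PreDTree.isLeaf] at h
  push_neg at h
  obtain ⟨u, hu1, hu2⟩ := h
  exact ⟨u, hu1, hu2⟩

theorem lbF_nonempty (hT : IsDelayedTree T) (t : V) : (lbF T t).Nonempty := by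
  have H : ∀ n t, descC T t = n → (lbF T t).Nonempty := by
    intro n
    induction n using Nat.strong_induction_on with
    | _ n IH =>
      intro t hn
      by_cases hleaf : T.isLeaf t
      · exact ⟨t, mem_lbF.mpr ⟨hleaf, anc_refl t⟩⟩
      · obtain ⟨u, hu⟩ := not_leaf_child hT hleaf
        have hlt : descC T u < n := hn ▸ descC_lt hT (anc_of_child hu) hu.2
        obtain ⟨x, hx⟩ := IH _ hlt u rfl
        rw [mem_lbF] at hx
        exact ⟨x, mem_lbF.mpr ⟨hx.1, anc_trans (anc_of_child hu) hx.2⟩⟩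
  exact H _ t rfl

theorem lbF_subset (hT : IsDelayedTree T) {u w : V} (h : T.anc u w) : lbF T w ⊆ lbF T u := by
  intro x hx
  rw [mem_lbF] at hx ⊢
  exact ⟨hx.1, anc_trans h hx.2⟩

theorem lbF_disjoint (hT : IsDelayedTree T) {u w : V} (hd : T.depth u = T.depth w)
    (hne : u ≠ w) : ∀ x, x ∈ lbF T u → x ∉ lbF T w := by
  intro x hx hx'
  rw [mem_lbF] at hx hx'
  rcases le_total (T.depth u) (T.depth w) with hle | hle
  · exact hne (anc_at_depth_unique hT hx.2 hx'.2 hd)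
  · exact hne (anc_at_depth_unique hT hx.2 hx'.2 hd)

end DSTree
namespace DSTree
open Classical DSAux

variable {V : Type*} [Fintype V] {T : PreDTree V}

theorem mem_leavesBelow_iff {t x : V} : x ∈ T.leavesBelow t ↔ x ∈ lbF T t := by
  rw [mem_lbF]; rfl

/-! ### nodeLLT -/

theorem llt_cross_const (hT : IsDelayedTree T) {u w : V}
    (hdisj : ∀ z, z ∈ lbF T u → z ∉ lbF T w) {x x' y y' : V}
    (hx : x ∈ lbF T u) (hx' : x' ∈ lbF T u) (hy : y ∈ lbF T w) (hy' : y' ∈ lbF T w)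
    (hllt : T.llt x y) : T.llt x' y' := by
  have hlx := (mem_lbF.mp hx).1
  have hlx' := (mem_lbF.mp hx').1
  have hly := (mem_lbF.mp hy).1
  have hly' := (mem_lbF.mp hy').1
  have hne : x' ≠ y' := fun h => hdisj x' hx' (h ▸ hy')
  rcases hT.llt_total x' y' hlx' hly' hne with h | h
  · exact h
  · exfalso
    -- h : llt y' x'
    have hne2 : x ≠ y' := fun hh => hdisj x hx (hh ▸ hy')
    rcases hT.llt_total x y' hlx hly' hne2 with h2 | h2
    · -- x < y' < x' , so y' in leaves of u
      have : y' ∈ T.leavesBelow u :=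
        hT.llt_compatible u x (mem_leavesBelow_iff.mpr hx) x' (mem_leavesBelow_iff.mpr hx') y' h2 h
      exact hdisj y' (mem_leavesBelow_iff.mp this) hy'
    · -- y' < x < y , so x in leaves of w
      have : x ∈ T.leavesBelow w :=
        hT.llt_compatible w y' (mem_leavesBelow_iff.mpr hy') y (mem_leavesBelow_iff.mpr hy) x h2 hllt
      exact hdisj x hx (mem_leavesBelow_iff.mp this)

theorem llt_iff_nodeLLT (hT : IsDelayedTree T) {u w : V}
    (hdisj : ∀ z, z ∈ lbF T u → z ∉ lbF T w) {x y : V}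
    (hx : x ∈ lbF T u) (hy : y ∈ lbF T w) : (T.llt x y ↔ T.nodeLLT u w) := by
  constructor
  · intro h
    refine ⟨⟨x, mem_leavesBelow_iff.mpr hx⟩, ⟨y, mem_leavesBelow_iff.mpr hy⟩, ?_⟩
    intro a ha b hb
    exact llt_cross_const hT hdisj hx (mem_leavesBelow_iff.mp ha) hy (mem_leavesBelow_iff.mp hb) h
  · intro h
    exact h.2.2 x (mem_leavesBelow_iff.mpr hx) y (mem_leavesBelow_iff.mpr hy)

theorem linOn_nodeLLT (hT : IsDelayedTree T) {D : Finset V}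
    (hdepth : ∀ u ∈ D, ∀ w ∈ D, T.depth u = T.depth w) : LinOn T.nodeLLT D := by
  refine ⟨?_, ?_, ?_⟩
  · intro u _ h
    obtain ⟨x, hx, y, hy, hxy⟩ : ∃ x ∈ T.leavesBelow u, ∃ y ∈ T.leavesBelow u, T.llt x y := by
      obtain ⟨x, hx⟩ := h.1
      exact ⟨x, hx, x, hx, h.2.2 x hx x hx⟩
    exact hT.llt_irrefl x (h.2.2 x hx x hx)
  · intro u _ w hw z _ h1 h2
    obtain ⟨y, hy⟩ := h1.2.1
    refine ⟨h1.1, h2.2.1, ?_⟩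
    intro a ha b hb
    exact hT.llt_trans a y b (h1.2.2 a ha y hy) (h2.2.2 y hy b hb)
  · intro u hu w hw hne
    have hdisj : ∀ z, z ∈ lbF T u → z ∉ lbF T w :=
      lbF_disjoint hT (hdepth u hu w hw) hne
    obtain ⟨x, hx⟩ := lbF_nonempty hT u
    obtain ⟨y, hy⟩ := lbF_nonempty hT w
    have hxy : x ≠ y := fun h => hdisj x hx (h ▸ hy)
    rcases hT.llt_total x y (mem_lbF.mp hx).1 (mem_lbF.mp hy).1 hxy with h | h
    · exact Or.inl ((llt_iff_nodeLLT hT hdisj hx hy).mp h)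
    · refine Or.inr ((llt_iff_nodeLLT hT (fun z hz hz' => hdisj z hz' hz) hy hx).mp h)

/-! ### closest common ancestor -/

noncomputable def ccaSet (T : PreDTree V) [Fintype V] (x y : V) : Finset V :=
  Finset.univ.filter (fun w => T.anc w x ∧ T.anc w y)

noncomputable def cca (T : PreDTree V) [Fintype V] (x y : V) : V :=
  if h : ∃ w, (T.anc w x ∧ T.anc w y) ∧
      ∀ w', T.anc w' x → T.anc w' y → T.depth w' ≤ T.depth w then
    h.choose
  else x

theorem cca_spec (hT : IsDelayedTree T) (x y : V) :
    T.anc (cca T x y) x ∧ T.anc (cca T x y) y ∧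
      ∀ w, T.anc w x → T.anc w y → T.depth w ≤ T.depth (cca T x y) := by
  have hne : (ccaSet T x y).Nonempty :=
    ⟨T.root, by simp [ccaSet, anc_root hT]⟩
  obtain ⟨m, hm, hmax⟩ := (ccaSet T x y).exists_max_image T.depth hne
  simp only [ccaSet, Finset.mem_filter, Finset.mem_univ, true_and] at hm
  have hex : ∃ w, (T.anc w x ∧ T.anc w y) ∧
      ∀ w', T.anc w' x → T.anc w' y → T.depth w' ≤ T.depth w := by
    refine ⟨m, hm, ?_⟩
    intro w' h1 h2
    exact hmax w' (by simp [ccaSet, h1, h2])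
  rw [cca, dif_pos hex]
  obtain ⟨⟨ha1, ha2⟩, hmax'⟩ := hex.choose_spec
  exact ⟨ha1, ha2, hmax'⟩

theorem cca_greatest (hT : IsDelayedTree T) {x y w : V} (h1 : T.anc w x) (h2 : T.anc w y) :
    T.anc w (cca T x y) := by
  obtain ⟨ha, _, hmax⟩ := cca_spec hT x y
  exact anc_comparable hT h1 ha (hmax w h1 h2)

theorem cca_ne_left (hT : IsDelayedTree T) {x y : V} (hx : T.isLeaf x) (hxy : x ≠ y) :
    cca T x y ≠ x := by
  intro h
  obtain ⟨_, h2, _⟩ := cca_spec hT x y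
  rw [h] at h2
  exact hxy (leaf_anc' hx h2).symm

theorem cca_ne_right (hT : IsDelayedTree T) {x y : V} (hy : T.isLeaf y) (hxy : x ≠ y) :
    cca T x y ≠ y := by
  intro h
  obtain ⟨h1, _, _⟩ := cca_spec hT x y
  rw [h] at h1
  exact hxy (leaf_anc' hy h1)

theorem depth_lt_cca_left (hT : IsDelayedTree T) {x y : V} (hx : T.isLeaf x) (hxy : x ≠ y) :
    T.depth (cca T x y) + 1 ≤ T.depth x := by
  obtain ⟨h1, _, _⟩ := cca_spec hT x y
  have hle := anc_depth_le hT h1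
  rcases eq_or_lt_of_le hle with heq | hlt
  · exact absurd (anc_at_depth_unique hT h1 (anc_refl x) heq) (cca_ne_left hT hx hxy)
  · omega

theorem depth_lt_cca_right (hT : IsDelayedTree T) {x y : V} (hy : T.isLeaf y) (hxy : x ≠ y) :
    T.depth (cca T x y) + 1 ≤ T.depth y := by
  obtain ⟨_, h2, _⟩ := cca_spec hT x y
  have hle := anc_depth_le hT h2
  rcases eq_or_lt_of_le hle with heq | hlt
  · exact absurd (anc_at_depth_unique hT h2 (anc_refl y) heq) (cca_ne_right hT hy hxy)
  · omega

theorem chUp_cca_ne (hT : IsDelayedTree T) {x y : V} (hx : T.isLeaf x) (hy : T.isLeaf y)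
    (hxy : x ≠ y) : chUp T (cca T x y) x ≠ chUp T (cca T x y) y := by
  intro h
  obtain ⟨h1, h2, hmax⟩ := cca_spec hT x y
  have hdx := depth_lt_cca_left hT hx hxy
  have hdy := depth_lt_cca_right hT hy hxy
  have hax : T.anc (chUp T (cca T x y) x) x := anc_chUp _ _
  have hay : T.anc (chUp T (cca T x y) x) y := h ▸ anc_chUp _ _
  have := hmax _ hax hay
  rw [depth_chUp hT hdx] at this
  omega

theorem depth_cca_left (hT : IsDelayedTree T) {x y : V} (hx : T.isLeaf x) (hy : T.isLeaf y)
    (hxy : x ≠ y) : T.depth (cca T x y) + 2 ≤ T.depth x := by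
  have hdx := depth_lt_cca_left hT hx hxy
  have hdy := depth_lt_cca_right hT hy hxy
  obtain ⟨h1, h2, hmax⟩ := cca_spec hT x y
  rcases eq_or_lt_of_le hdx with heq | hlt
  · exfalso
    -- x is a child of cca x y; so x is the only child, contradicting chUp y ≠ chUp x
    have hxchUp : x = chUp T (cca T x y) x :=
      (anc_at_depth_unique hT (anc_chUp _ _) (anc_refl x)
        (by rw [depth_chUp hT hdx, ← heq])).symm
    have hchx : T.isChild (chUp T (cca T x y) x) (cca T x y) := isChild_chUp hT h1 hdx
    have hchy : T.isChild (chUp T (cca T x y) y) (cca T x y) := isChild_chUp hT h2 hdy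
    have hpx : T.parent x = cca T x y := by
      have := hchx.1
      rw [← hxchUp] at this
      exact this
    have := hT.leaf_only_child x (chUp T (cca T x y) y) hx (by rw [hpx]; exact hchy)
    exact chUp_cca_ne hT hx hy hxy (by rw [← hxchUp, this])
  · omega

theorem depth_cca_right (hT : IsDelayedTree T) {x y : V} (hx : T.isLeaf x) (hy : T.isLeaf y)
    (hxy : x ≠ y) : T.depth (cca T x y) + 2 ≤ T.depth y := by
  have hdx := depth_lt_cca_left hT hx hxy
  have hdy := depth_lt_cca_right hT hy hxy
  obtain ⟨h1, h2, hmax⟩ := cca_spec hT x y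
  rcases eq_or_lt_of_le hdy with heq | hlt
  · exfalso
    have hychUp : y = chUp T (cca T x y) y :=
      (anc_at_depth_unique hT (anc_chUp _ _) (anc_refl y)
        (by rw [depth_chUp hT hdy, ← heq])).symm
    have hchx : T.isChild (chUp T (cca T x y) x) (cca T x y) := isChild_chUp hT h1 hdx
    have hchy : T.isChild (chUp T (cca T x y) y) (cca T x y) := isChild_chUp hT h2 hdy
    have hpy : T.parent y = cca T x y := by
      have := hchy.1
      rw [← hychUp] at this
      exact this
    have := hT.leaf_only_child y (chUp T (cca T x y) x) hy (by rw [hpy]; exact hchx)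
    exact chUp_cca_ne hT hx hy hxy (by rw [← hychUp, this])
  · omega

theorem cca_eq (hT : IsDelayedTree T) {t u v x y : V} (hu : T.isChild u t) (hv : T.isChild v t)
    (huv : u ≠ v) (hux : T.anc u x) (hvy : T.anc v y) : cca T x y = t := by
  obtain ⟨h1, h2, hmax⟩ := cca_spec hT x y
  have htx : T.anc t x := anc_trans (anc_of_child hu) hux
  have hty : T.anc t y := anc_trans (anc_of_child hv) hvy
  have hge := hmax t htx hty
  have hdu := depth_child hT hu
  have hdv := depth_child hT hv
  by_cases hgt : T.depth t + 1 ≤ T.depth (cca T x y)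
  · exfalso
    have hau : T.anc u (cca T x y) :=
      anc_comparable hT hux h1 (by omega)
    have hav : T.anc v (cca T x y) :=
      anc_comparable hT hvy h2 (by omega)
    exact huv (anc_at_depth_unique hT hau hav (by omega))
  · exact (anc_at_depth_unique hT h1 htx (by omega)) ▸ rfl

/-! ### characterisation of the realised order -/

theorem realLT_iff (hT : IsDelayedTree T) {x y : V} (hx : T.isLeaf x) (hy : T.isLeaf y)
    (hxy : x ≠ y) :
    T.realLT x y ↔ T.pre (cca T x y) (gcUp T (cca T x y) x) (gcUp T (cca T x y) y) := by
  obtain ⟨h1, h2, hmax⟩ := cca_spec hT x y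
  have hdx := depth_cca_left hT hx hy hxy
  have hdy := depth_cca_right hT hx hy hxy
  constructor
  · rintro ⟨t, x', y', hgx, hgy, hpne, hax, hay, hpre⟩
    have hteq : cca T x y = t :=
      cca_eq hT (hgx.2) (hgy.2) hpne (anc_trans (anc_of_child hgx.1) hax)
        (anc_trans (anc_of_child hgy.1) hay)
    have hgx' : T.isGrandchild x' (cca T x y) := by rw [hteq]; exact hgx
    have hgy' : T.isGrandchild y' (cca T x y) := by rw [hteq]; exact hgy
    rw [gcUp_eq_of_anc hT hgx' hax, gcUp_eq_of_anc hT hgy' hay, hteq]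
    exact hpre
  · intro hpre
    refine ⟨cca T x y, gcUp T (cca T x y) x, gcUp T (cca T x y) y,
      isGrandchild_gcUp hT h1 hdx, isGrandchild_gcUp hT h2 hdy, ?_, anc_gcUp _ _, anc_gcUp _ _, hpre⟩
    rw [parent_gcUp hT h1 hdx, parent_gcUp hT h2 hdy]
    exact chUp_cca_ne hT hx hy hxy

theorem realLT_force (hT : IsDelayedTree T) (hW : T.WellFormed) {t g₁ g₂ z : V}
    (h1 : T.isGrandchild g₁ t) (h2 : T.isGrandchild g₂ t) (hz : T.isGrandchild z t)
    (hpz1 : T.parent z ≠ T.parent g₁) (hpz2 : T.parent z ≠ T.parent g₂)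
    (ha : T.pre t g₁ z) (hb : T.pre t z g₂) :
    ∀ x ∈ lbF T g₁, ∀ y ∈ lbF T g₂, T.realLT x y := by
  intro x hxm y hym
  obtain ⟨c, hc⟩ := lbF_nonempty hT z
  have hxc : T.realLT x c :=
    ⟨t, g₁, z, h1, hz, fun h => hpz1 h.symm, (mem_lbF.mp hxm).2, (mem_lbF.mp hc).2, ha⟩
  have hcy : T.realLT c y :=
    ⟨t, z, g₂, hz, h2, hpz2, (mem_lbF.mp hc).2, (mem_lbF.mp hym).2, hb⟩
  exact hW.2.1 x c y hxc hcy

end DSTree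
namespace DSTree
open Classical DSAux

variable {V : Type*} [Fintype V] {T : PreDTree V}

noncomputable def gcF (T : PreDTree V) [Fintype V] (t : V) : Finset V :=
  Finset.univ.filter (fun w => T.isGrandchild w t)

noncomputable def chF (T : PreDTree V) [Fintype V] (t : V) : Finset V :=
  Finset.univ.filter (fun u => T.isChild u t)

theorem mem_gcF {t w : V} : w ∈ gcF T t ↔ T.isGrandchild w t := by simp [gcF]

theorem mem_chF {t u : V} : u ∈ chF T t ↔ T.isChild u t := by simp [chF]

theorem linOn_pre (hT : IsDelayedTree T) (t : V) : LinOn (T.pre t) (gcF T t) := by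
  refine ⟨fun x _ => hT.pre_irrefl t x, fun x _ y _ z _ => hT.pre_trans t x y z, ?_⟩
  intro x hx y hy hne
  exact hT.pre_total t x y (mem_gcF.mp hx) (mem_gcF.mp hy) hne

def preBetween (T : PreDTree V) (t z a b : V) : Prop :=
  (T.pre t a z ∧ T.pre t z b) ∨ (T.pre t b z ∧ T.pre t z a)

noncomputable def runOf (T : PreDTree V) [Fintype V] (t : V) (H : Finset V) (w : V) :
    Finset V :=
  H.filter (fun s => T.parent s = T.parent w ∧
    ∀ z ∈ H, T.parent z ≠ T.parent w → ¬ preBetween T t z s w)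

theorem mem_runOf {t w s : V} {H : Finset V} :
    s ∈ runOf T t H w ↔ s ∈ H ∧ T.parent s = T.parent w ∧
      ∀ z ∈ H, T.parent z ≠ T.parent w → ¬ preBetween T t z s w := by
  simp [runOf, and_assoc]

/-- positions of the grandchildren of `t` in the order `pre t` -/
theorem exists_pos (hT : IsDelayedTree T) (t : V) :
    ∃ pos : V → ℕ, (∀ a ∈ gcF T t, ∀ b ∈ gcF T t, (T.pre t a b ↔ pos a < pos b)) ∧
      (∀ a ∈ gcF T t, ∀ b ∈ gcF T t, pos a = pos b → a = b) := by
  obtain ⟨e, he⟩ := exists_isEnum (gcF T t) (linOn_pre hT t)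
  set pos : V → ℕ := fun v => if h : ∃ i, e i = v then (h.choose : ℕ) else 0 with hposdef
  have hpos : ∀ a ∈ gcF T t, ∃ h : ∃ i, e i = a, pos a = (h.choose : ℕ) := by
    intro a ha
    have h : ∃ i, e i = a := he.2.1 a ha
    exact ⟨h, by rw [hposdef]; simp [h]⟩
  refine ⟨pos, ?_, ?_⟩
  · intro a ha b hb
    obtain ⟨h1, hp1⟩ := hpos a ha
    obtain ⟨h2, hp2⟩ := hpos b hb
    rw [hp1, hp2]
    have := he.2.2 h1.choose h2.choose
    rw [h1.choose_spec, h2.choose_spec] at this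
    rw [← this]
    exact Iff.symm Fin.lt_iff_val_lt_val
  · intro a ha b hb hab
    obtain ⟨h1, hp1⟩ := hpos a ha
    obtain ⟨h2, hp2⟩ := hpos b hb
    rw [hp1, hp2] at hab
    have : h1.choose = h2.choose := Fin.ext hab
    rw [← h1.choose_spec, ← h2.choose_spec, this]

theorem pb_iff {pos : V → ℕ} {t : V}
    (hpos : ∀ a ∈ gcF T t, ∀ b ∈ gcF T t, (T.pre t a b ↔ pos a < pos b))
    {z a b : V} (hz : z ∈ gcF T t) (ha : a ∈ gcF T t) (hb : b ∈ gcF T t) :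
    preBetween T t z a b ↔
      ((pos a < pos z ∧ pos z < pos b) ∨ (pos b < pos z ∧ pos z < pos a)) := by
  rw [preBetween, hpos a ha z hz, hpos z hz b hb, hpos b hb z hz, hpos z hz a ha]

theorem run_eq (hT : IsDelayedTree T) {t : V} {H : Finset V} (hH : H ⊆ gcF T t) {s w : V}
    (hw : w ∈ H) (hs : s ∈ runOf T t H w) : runOf T t H s = runOf T t H w := by
  obtain ⟨pos, hpos, hinj⟩ := exists_pos hT t
  obtain ⟨hsH, hsp, hsb⟩ := mem_runOf.mp hs
  ext r
  rw [mem_runOf, mem_runOf]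
  constructor
  · rintro ⟨hrH, hrp, hrb⟩
    refine ⟨hrH, hrp.trans hsp, ?_⟩
    intro z hz hzp hpb
    have hzs : T.parent z ≠ T.parent s := by rw [hsp]; exact hzp
    have h1 := hrb z hz hzs
    have h2 := hsb z hz hzp
    rw [pb_iff hpos (hH hz) (hH hrH) (hH hw)] at hpb
    rw [pb_iff hpos (hH hz) (hH hrH) (hH hsH)] at h1
    rw [pb_iff hpos (hH hz) (hH hsH) (hH hw)] at h2
    have hzne : pos z ≠ pos s := fun h => hzs (by rw [hinj z (hH hz) s (hH hsH) h])
    omega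
  · rintro ⟨hrH, hrp, hrb⟩
    refine ⟨hrH, hrp.trans hsp.symm, ?_⟩
    intro z hz hzp hpb
    have hzw : T.parent z ≠ T.parent w := by rw [← hsp]; exact hzp
    have h1 := hrb z hz hzw
    have h2 := hsb z hz hzw
    rw [pb_iff hpos (hH hz) (hH hrH) (hH hsH)] at hpb
    rw [pb_iff hpos (hH hz) (hH hrH) (hH hw)] at h1
    rw [pb_iff hpos (hH hz) (hH hsH) (hH hw)] at h2
    have hzne : pos z ≠ pos w := fun h => hzw (by rw [hinj z (hH hz) w (hH hw) h])
    omega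

theorem run_self {t w : V} {H : Finset V} (hT : IsDelayedTree T) (hH : H ⊆ gcF T t)
    (hw : w ∈ H) : w ∈ runOf T t H w := by
  rw [mem_runOf]
  refine ⟨hw, rfl, ?_⟩
  intro z hz hzp hpb
  rcases hpb with ⟨h1, h2⟩ | ⟨h1, h2⟩ <;>
    exact hT.pre_irrefl t z (hT.pre_trans t z w z h2 h1)

theorem run_eq_or_disjoint (hT : IsDelayedTree T) {t : V} {H : Finset V} (hH : H ⊆ gcF T t)
    {w₁ w₂ a : V} (hw₁ : w₁ ∈ H) (hw₂ : w₂ ∈ H) (h1 : a ∈ runOf T t H w₁)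
    (h2 : a ∈ runOf T t H w₂) : runOf T t H w₁ = runOf T t H w₂ := by
  rw [← run_eq hT hH hw₁ h1, ← run_eq hT hH hw₂ h2]

theorem run_convex (hT : IsDelayedTree T) {t : V} {H : Finset V} (hH : H ⊆ gcF T t)
    {w a b h : V} (hw : w ∈ H) (ha : a ∈ runOf T t H w) (hb : b ∈ runOf T t H w)
    (hhH : h ∈ H) (hpb : preBetween T t h a b) : h ∈ runOf T t H w := by
  obtain ⟨pos, hpos, hinj⟩ := exists_pos hT t
  obtain ⟨haH, hap, hab⟩ := mem_runOf.mp ha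
  obtain ⟨hbH, hbp, hbb⟩ := mem_runOf.mp hb
  rw [pb_iff hpos (hH hhH) (hH haH) (hH hbH)] at hpb
  -- h has the same parent as w
  have hpar : T.parent h = T.parent w := by
    by_contra hhp
    have h1 := hab h hhH hhp
    have h2 := hbb h hhH hhp
    rw [pb_iff hpos (hH hhH) (hH haH) (hH hw)] at h1
    rw [pb_iff hpos (hH hhH) (hH hbH) (hH hw)] at h2
    have hne : pos h ≠ pos w := fun hh => hhp (by rw [hinj h (hH hhH) w (hH hw) hh])
    omega
  rw [mem_runOf]
  refine ⟨hhH, hpar, ?_⟩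
  intro z hz hzp hzb
  have h1 := hab z hz hzp
  have h2 := hbb z hz hzp
  rw [pb_iff hpos (hH hz) (hH hhH) (hH hw)] at hzb
  rw [pb_iff hpos (hH hz) (hH haH) (hH hw)] at h1
  rw [pb_iff hpos (hH hz) (hH hbH) (hH hw)] at h2
  have hzw : pos z ≠ pos w := fun hh => hzp (by rw [hinj z (hH hz) w (hH hw) hh])
  have hzh : pos z ≠ pos h := fun hh => hzp (by rw [hinj z (hH hz) h (hH hhH) hh, hpar])
  omega

theorem run_uniform (hT : IsDelayedTree T) {t : V} {H : Finset V} (hH : H ⊆ gcF T t)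
    {w₁ w₂ a b a' b' : V} (hw₁ : w₁ ∈ H) (hw₂ : w₂ ∈ H)
    (ha : a ∈ runOf T t H w₁) (hb : b ∈ runOf T t H w₂)
    (ha' : a' ∈ runOf T t H w₁) (hb' : b' ∈ runOf T t H w₂)
    (hne : runOf T t H w₁ ≠ runOf T t H w₂) (hab : T.pre t a b) : T.pre t a' b' := by
  obtain ⟨pos, hpos, hinj⟩ := exists_pos hT t
  have hmem : ∀ {r}, r ∈ runOf T t H w₁ → r ∈ H := fun hr => (mem_runOf.mp hr).1
  have hmem2 : ∀ {r}, r ∈ runOf T t H w₂ → r ∈ H := fun hr => (mem_runOf.mp hr).1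
  have hdisj : ∀ r, r ∈ runOf T t H w₁ → r ∉ runOf T t H w₂ := by
    intro r hr1 hr2
    exact hne (run_eq_or_disjoint hT hH hw₁ hw₂ hr1 hr2)
  by_contra hcon
  have hne' : a' ≠ b' := fun hh => hdisj a' ha' (hh ▸ hb')
  have hto := (linOn_pre hT t).2.2 a' (hH (hmem ha')) b' (hH (hmem2 hb')) hne'
  have hba' : T.pre t b' a' := hto.resolve_left hcon
  rw [hpos a (hH (hmem ha)) b (hH (hmem2 hb))] at hab
  rw [hpos b' (hH (hmem2 hb')) a' (hH (hmem ha'))] at hba'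
  -- compare a' and b
  have hne2 : a' ≠ b := fun hh => hdisj a' ha' (hh ▸ hb)
  have hne2' : pos a' ≠ pos b := fun hh => hne2 (hinj _ (hH (hmem ha')) _ (hH (hmem2 hb)) hh)
  rcases lt_or_gt_of_ne hne2' with hlt | hgt
  · -- b' < a' < b : a' is preBetween b' and b, so a' in run w₂
    have : a' ∈ runOf T t H w₂ := by
      apply run_convex hT hH hw₂ hb' hb (hmem ha')
      rw [pb_iff hpos (hH (hmem ha')) (hH (hmem2 hb')) (hH (hmem2 hb))]
      omega
    exact hdisj a' ha' this
  · -- a < b < a' : b is preBetween a and a', so b in run w₁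
    have : b ∈ runOf T t H w₁ := by
      apply run_convex hT hH hw₁ ha ha' (hmem2 hb)
      rw [pb_iff hpos (hH (hmem2 hb)) (hH (hmem ha)) (hH (hmem ha'))]
      omega
    exact hdisj b this hb

/-- canonical representative of a nonempty finset -/
noncomputable def rep (T : PreDTree V) (B : Finset V) : V :=
  if h : B.Nonempty then h.choose else T.root

theorem rep_mem {B : Finset V} (h : B.Nonempty) : rep T B ∈ B := by
  rw [rep, dif_pos h]
  exact h.choose_spec

theorem run_pre_iff (hT : IsDelayedTree T) {t : V} {H : Finset V} (hH : H ⊆ gcF T t)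
    {w₁ w₂ a b : V} (hw₁ : w₁ ∈ H) (hw₂ : w₂ ∈ H)
    (ha : a ∈ runOf T t H w₁) (hb : b ∈ runOf T t H w₂)
    (hne : runOf T t H w₁ ≠ runOf T t H w₂) :
    (T.pre t a b ↔ T.pre t (rep T (runOf T t H w₁)) (rep T (runOf T t H w₂))) := by
  have hrep1 : rep T (runOf T t H w₁) ∈ runOf T t H w₁ := rep_mem ⟨w₁, run_self hT hH hw₁⟩
  have hrep2 : rep T (runOf T t H w₂) ∈ runOf T t H w₂ := rep_mem ⟨w₂, run_self hT hH hw₂⟩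
  constructor
  · intro h
    exact run_uniform hT hH hw₁ hw₂ ha hb hrep1 hrep2 hne h
  · intro h
    exact run_uniform hT hH hw₁ hw₂ hrep1 hrep2 ha hb hne h

theorem run_ne_of_parent_ne (hT : IsDelayedTree T) {t : V} {H : Finset V} (hH : H ⊆ gcF T t)
    {w₁ w₂ : V} (hw₁ : w₁ ∈ H) (hw₂ : w₂ ∈ H) (hp : T.parent w₁ ≠ T.parent w₂) :
    runOf T t H w₁ ≠ runOf T t H w₂ := by
  intro h
  have := run_self hT hH hw₂
  rw [← h, mem_runOf] at this
  exact hp this.2.1.symm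

theorem run_sep (hT : IsDelayedTree T) {t : V} {H : Finset V} (hH : H ⊆ gcF T t)
    {w₁ w₂ : V} (hw₁ : w₁ ∈ H) (hw₂ : w₂ ∈ H) (hp : T.parent w₁ = T.parent w₂)
    (hne : runOf T t H w₁ ≠ runOf T t H w₂) :
    ∃ z ∈ H, T.parent z ≠ T.parent w₁ ∧ preBetween T t z w₁ w₂ := by
  have hnm : w₂ ∉ runOf T t H w₁ := by
    intro h
    exact hne (run_eq hT hH hw₁ h).symm
  rw [mem_runOf] at hnm
  push_neg at hnm
  obtain ⟨z, hz, hzp, hzb⟩ := hnm hw₂ hp.symm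
  refine ⟨z, hz, hzp, ?_⟩
  rcases hzb with ⟨h1, h2⟩ | ⟨h1, h2⟩
  · exact Or.inr ⟨h1, h2⟩
  · exact Or.inl ⟨h1, h2⟩

end DSTree
namespace DSTree
open Classical DSAux

variable {V : Type*} [Fintype V] {T : PreDTree V}

theorem anc_t_chUp (hT : IsDelayedTree T) {t x : V} (ha : T.anc t x)
    (hd : T.depth t + 1 ≤ T.depth x) : T.anc t (chUp T t x) :=
  ⟨1, by simpa using parent_chUp hT ha hd⟩

theorem anc_t_gcUp (hT : IsDelayedTree T) {t x : V} (ha : T.anc t x)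
    (hd : T.depth t + 2 ≤ T.depth x) : T.anc t (gcUp T t x) :=
  anc_trans (anc_t_chUp hT ha (by omega)) ⟨1, by simpa using parent_gcUp hT ha hd⟩

theorem gcUp_ne_t (hT : IsDelayedTree T) {t x : V} (hd : T.depth t + 2 ≤ T.depth x) :
    gcUp T t x ≠ t := by
  intro h
  have := depth_gcUp hT hd
  rw [h] at this
  omega

theorem chUp_ne_t (hT : IsDelayedTree T) {t x : V} (hd : T.depth t + 1 ≤ T.depth x) :
    chUp T t x ≠ t := by
  intro h
  have := depth_chUp hT hd
  rw [h] at this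
  omega

/-- representative grandchild of the root below `u`. -/
noncomputable def rootRep (T : PreDTree V) [Fintype V] (u : V) : V :=
  rep T ((gcF T T.root).filter (fun g => T.anc u g))

theorem rootRep_spec (hT : IsDelayedTree T) {u : V} (hu : T.isChild u T.root)
    (hnl : ¬ T.isLeaf u) :
    rootRep T u ∈ gcF T T.root ∧ T.parent (rootRep T u) = u := by
  obtain ⟨c, hc⟩ := not_leaf_child hT hnl
  have hne : ((gcF T T.root).filter (fun g => T.anc u g)).Nonempty := by
    refine ⟨c, Finset.mem_filter.mpr ⟨mem_gcF.mpr ⟨?_, ?_⟩, anc_of_child hc⟩⟩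
    · rw [hc.1]; exact hc
    · rw [hc.1]; exact hu
  have hmem : rootRep T u ∈ (gcF T T.root).filter (fun g => T.anc u g) := by
    rw [rootRep]; exact rep_mem hne
  rw [Finset.mem_filter] at hmem
  obtain ⟨hg, hanc⟩ := hmem
  refine ⟨hg, ?_⟩
  have hdg : T.depth (rootRep T u) = 2 := by
    have := depth_gc hT (mem_gcF.mp hg)
    rw [hT.depth_root] at this
    omega
  have hdu : T.depth u = 1 := by
    have := depth_child hT hu
    rw [hT.depth_root] at this
    omega
  have := anc_canonical hT hanc
  rw [hdg, hdu] at this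
  simpa using this

/-- order on the children of `t` induced one level up. -/
noncomputable def chOrd (T : PreDTree V) [Fintype V] (t u v : V) : Prop :=
  if t = T.root then T.pre T.root (rootRep T u) (rootRep T v) else T.pre (T.parent t) u v

/-- The first intermediate order `M₁`. -/
noncomputable def M1 (T : PreDTree V) [Fintype V] (x y : V) : Prop :=
  T.isLeaf x ∧ T.isLeaf y ∧ x ≠ y ∧
    chOrd T (cca T x y) (chUp T (cca T x y) x) (chUp T (cca T x y) y)

/-- lexicographic order on elements of a process at `t`: first by parent (using `chOrd`),
then by `pre t`. -/
noncomputable def lexRel (T : PreDTree V) [Fintype V] (t a b : V) : Prop :=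
  if T.parent a = T.parent b then T.pre t a b else chOrd T t (T.parent a) (T.parent b)

/-- leaves under a set of nodes -/
noncomputable def lbU (T : PreDTree V) [Fintype V] (H : Finset V) : Finset V :=
  H.biUnion (lbF T)

theorem mem_lbU {H : Finset V} {x : V} : x ∈ lbU T H ↔ ∃ w ∈ H, x ∈ lbF T w := by
  simp [lbU]

/-- the descent guard for the separation process -/
def sepGo (T : PreDTree V) [Fintype V] (t : V) (H : Finset V) (x y : V) : Prop :=
  T.anc t x ∧ T.anc t y ∧ T.depth t + 2 ≤ T.depth x ∧ T.depth t + 2 ≤ T.depth y ∧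
    gcUp T t x ∈ H ∧ gcUp T t y ∈ H ∧
    runOf T t H (gcUp T t x) = runOf T t H (gcUp T t y)

/-- the separating process node for the pair `x, y`, starting from the process `(t, H)`. -/
noncomputable def sep (hT : IsDelayedTree T) (t : V) (H : Finset V) (x y : V) : V × Finset V :=
  if h : sepGo T t H x y then
    if runOf T t H (gcUp T t x) = {gcUp T t x} then
      sep hT (gcUp T t x) (gcF T (gcUp T t x)) x y
    else
      sep hT (T.parent (gcUp T t x)) ((runOf T t H (gcUp T t x)).biUnion (chF T)) x y
  else (t, H)
termination_by descC T t
decreasing_by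
  · exact descC_lt hT (anc_t_gcUp hT h.1 h.2.2.1) (gcUp_ne_t hT h.2.2.1)
  · rw [parent_gcUp hT h.1 h.2.2.1]
    exact descC_lt hT (anc_t_chUp hT h.1 (by have := h.2.2.1; omega)) (chUp_ne_t hT (by have := h.2.2.1; omega))

theorem sep_stop (hT : IsDelayedTree T) {t : V} {H : Finset V} {x y : V}
    (h : ¬ sepGo T t H x y) : sep hT t H x y = (t, H) := by
  rw [sep]
  simp [h]

theorem sep_step1 (hT : IsDelayedTree T) {t : V} {H : Finset V} {x y : V}
    (h : sepGo T t H x y) (hsing : runOf T t H (gcUp T t x) = {gcUp T t x}) :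
    sep hT t H x y = sep hT (gcUp T t x) (gcF T (gcUp T t x)) x y := by
  rw [sep]
  simp [h, hsing]

theorem sep_step2 (hT : IsDelayedTree T) {t : V} {H : Finset V} {x y : V}
    (h : sepGo T t H x y) (hsing : runOf T t H (gcUp T t x) ≠ {gcUp T t x}) :
    sep hT t H x y =
      sep hT (T.parent (gcUp T t x)) ((runOf T t H (gcUp T t x)).biUnion (chF T)) x y := by
  rw [sep]
  simp [h, hsing]

/-- The second intermediate order `M₂`. -/
noncomputable def M2 (hT : IsDelayedTree T) (x y : V) : Prop :=
  T.isLeaf x ∧ T.isLeaf y ∧ x ≠ y ∧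
    T.nodeLLT
      (rep T (runOf T (sep hT T.root (gcF T T.root) x y).1 (sep hT T.root (gcF T T.root) x y).2
        (gcUp T (sep hT T.root (gcF T T.root) x y).1 x)))
      (rep T (runOf T (sep hT T.root (gcF T T.root) x y).1 (sep hT T.root (gcF T T.root) x y).2
        (gcUp T (sep hT T.root (gcF T T.root) x y).1 y)))

end DSTree
namespace DSAux
open Classical

variable {V : Type*}

theorem CGood_map {C : PermClass} {P Q P' Q' : V → V → Prop} {S : Finset V} (r : V → V)
    (hinj : ∀ x ∈ S, ∀ y ∈ S, r x = r y → x = y)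
    (hP : ∀ x ∈ S, ∀ y ∈ S, (P' x y ↔ P (r x) (r y)))
    (hQ : ∀ x ∈ S, ∀ y ∈ S, (Q' x y ↔ Q (r x) (r y)))
    (h : CGood C P Q (S.image r)) : CGood C P' Q' S := by
  classical
  obtain ⟨n, ρ, hb, hC⟩ := h
  obtain ⟨e, he, hq⟩ := biorder_iff.mp hb
  have hpre : ∀ i, ∃ x, x ∈ S ∧ r x = e i := by
    intro i
    have := he.1 i
    rw [Finset.mem_image] at this
    exact this
  have he's : ∀ i, ((hpre i).choose ∈ S) ∧ r ((hpre i).choose) = e i := fun i => (hpre i).choose_spec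
  refine ⟨n, ρ, biorder_iff.mpr ⟨fun i => (hpre i).choose, ⟨fun i => (he's i).1, ?_, ?_⟩, ?_⟩, hC⟩
  · intro x hx
    have : r x ∈ S.image r := Finset.mem_image_of_mem r hx
    obtain ⟨i, hi⟩ := he.2.1 (r x) this
    refine ⟨i, hinj _ (he's i).1 _ hx (by rw [(he's i).2, hi])⟩
  · intro i j
    rw [he.2.2 i j, ← (he's i).2, ← (he's j).2, ← hP _ (he's i).1 _ (he's j).1]
  · intro i j
    rw [hq i j, ← (he's i).2, ← (he's j).2, ← hQ _ (he's i).1 _ (he's j).1]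

end DSAux

namespace DSTree
open Classical DSAux

variable {V : Type*} [Fintype V] {T : PreDTree V} {C : PermClass}

theorem nodeLLT_irrefl (hT : IsDelayedTree T) (u : V) : ¬ T.nodeLLT u u := by
  rintro ⟨⟨z, hz⟩, _, hall⟩
  exact hT.llt_irrefl z (hall z hz z hz)

theorem nodeLLT_anc_iff (hT : IsDelayedTree T) {u v a b : V} (hua : T.anc u a)
    (hvb : T.anc v b) (hdisj : ∀ z, z ∈ lbF T u → z ∉ lbF T v) :
    (T.nodeLLT a b ↔ T.nodeLLT u v) := by
  obtain ⟨x, hx⟩ := lbF_nonempty hT a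
  obtain ⟨y, hy⟩ := lbF_nonempty hT b
  have hxu : x ∈ lbF T u := lbF_subset hT hua hx
  have hyv : y ∈ lbF T v := lbF_subset hT hvb hy
  constructor
  · intro h
    have hllt : T.llt x y :=
      h.2.2 x (mem_leavesBelow_iff.mpr hx) y (mem_leavesBelow_iff.mpr hy)
    exact (llt_iff_nodeLLT hT hdisj hxu hyv).mp hllt
  · intro h
    have hllt : T.llt x y :=
      h.2.2 x (mem_leavesBelow_iff.mpr hxu) y (mem_leavesBelow_iff.mpr hyv)
    have hd2 : ∀ z, z ∈ lbF T a → z ∉ lbF T b := by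
      intro z hz hz'
      exact hdisj z (lbF_subset hT hua hz) (lbF_subset hT hvb hz')
    exact (llt_iff_nodeLLT hT hd2 hx hy).mp hllt

theorem gcF_coe (t : V) : (↑(gcF T t) : Set V) = {x | T.isGrandchild x t} := by
  ext w; simp [gcF]

theorem isChild_parent (hT : IsDelayedTree T) {t : V} (h : t ≠ T.root) :
    T.isChild t (T.parent t) := by
  refine ⟨rfl, ?_⟩
  intro hh
  have := hT.depth_parent t h
  rw [← hh] at this
  omega

theorem chF_sub_gcF (hT : IsDelayedTree T) {t : V} (h : t ≠ T.root) :
    chF T t ⊆ gcF T (T.parent t) := by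
  intro u hu
  rw [mem_chF] at hu
  rw [mem_gcF]
  refine ⟨⟨rfl, ?_⟩, ?_⟩
  · intro hh
    rw [hu.1] at hh
    exact hu.2 hh
  · rw [hu.1]
    exact isChild_parent hT h

theorem goodLab (hT : IsDelayedTree T)
    (hlab : ∀ t : V, ∀ (m : ℕ) (τ : Equiv.Perm (Fin m)),
      BiorderPerm T.nodeLLT (T.pre t) {x | T.isGrandchild x t} τ → C m τ)
    (t : V) : CGood C T.nodeLLT (T.pre t) (gcF T t) := by
  have hlin1 : LinOn T.nodeLLT (gcF T t) :=
    linOn_nodeLLT hT (fun u hu w hw => by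
      rw [depth_gc hT (mem_gcF.mp hu), depth_gc hT (mem_gcF.mp hw)])
  have hlin2 : LinOn (T.pre t) (gcF T t) := linOn_pre hT t
  obtain ⟨ρ, hb⟩ := exists_biorder hlin1 hlin2
  refine ⟨_, ρ, hb, ?_⟩
  apply hlab t
  rw [← gcF_coe]
  exact hb

/-- the top permutation on the children of `t` (`nodeLLT` versus `chOrd`). -/
theorem good_top_ch (hT : IsDelayedTree T) (hpat : ClosedUnderPatterns C)
    (hlab : ∀ t : V, ∀ (m : ℕ) (τ : Equiv.Perm (Fin m)),
      BiorderPerm T.nodeLLT (T.pre t) {x | T.isGrandchild x t} τ → C m τ)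
    (t : V) (hnlc : ∀ u ∈ chF T t, ¬ T.isLeaf u) :
    CGood C T.nodeLLT (chOrd T t) (chF T t) := by
  by_cases htr : t = T.root
  · subst htr
    have hrr : ∀ u ∈ chF T T.root, rootRep T u ∈ gcF T T.root ∧ T.parent (rootRep T u) = u :=
      fun u hu => rootRep_spec hT (mem_chF.mp hu) (hnlc u hu)
    have hsub' : (chF T T.root).image (rootRep T) ⊆ gcF T T.root := by
      intro w hw
      rw [Finset.mem_image] at hw
      obtain ⟨u, hu, rfl⟩ := hw
      exact (hrr u hu).1
    have hgood := CGood_subset hpat hsub' (goodLab hT hlab T.root)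
    apply CGood_map (rootRep T) ?_ ?_ ?_ hgood
    · intro x hx y hy hxy
      rw [← (hrr x hx).2, ← (hrr y hy).2, hxy]
    · intro x hx y hy
      by_cases hxy : x = y
      · subst hxy
        exact iff_of_false (nodeLLT_irrefl hT x) (nodeLLT_irrefl hT (rootRep T x))
      · have hax : T.anc x (rootRep T x) := by
          conv_lhs => rw [← (hrr x hx).2]
          exact anc_parent _
        have hay : T.anc y (rootRep T y) := by
          conv_lhs => rw [← (hrr y hy).2]
          exact anc_parent _
        have hdisj : ∀ z, z ∈ lbF T x → z ∉ lbF T y :=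
          lbF_disjoint hT (by
            rw [depth_child hT (mem_chF.mp hx), depth_child hT (mem_chF.mp hy)]) hxy
        exact (nodeLLT_anc_iff hT hax hay hdisj).symm
    · intro x hx y hy
      rw [chOrd, if_pos rfl]
  · have hgood := CGood_subset hpat (chF_sub_gcF hT htr) (goodLab hT hlab (T.parent t))
    apply CGood_congr ?_ ?_ hgood
    · intro x _ y _; exact Iff.rfl
    · intro x _ y _
      rw [chOrd, if_neg htr]

end DSTree
namespace DSTree
open Classical DSAux

variable {V : Type*} [Fintype V] {T : PreDTree V} {C : PermClass}

theorem anc_depth_lt (hT : IsDelayedTree T) {g x : V} (h : T.anc g x) (hne : x ≠ g) :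
    T.depth g + 1 ≤ T.depth x := by
  have hle := anc_depth_le hT h
  rcases eq_or_lt_of_le hle with heq | hlt
  · exact absurd (anc_at_depth_unique hT h (anc_refl x) heq).symm hne
  · omega

theorem not_leaf_of_ch {g u : V} (h : T.isChild u g) : ¬ T.isLeaf g :=
  fun hl => h.2 (hl u h.1)

theorem not_leaf_of_gc {g w : V} (h : T.isGrandchild w g) : ¬ T.isLeaf g :=
  not_leaf_of_ch h.2

theorem nlc_of_gc (hT : IsDelayedTree T) {t : V} (hgc : (gcF T t).Nonempty) :
    ∀ u ∈ chF T t, ¬ T.isLeaf u := by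
  intro u hu hl
  obtain ⟨w, hw⟩ := hgc
  rw [mem_gcF] at hw
  rw [mem_chF] at hu
  have hpw : T.parent w = u := by
    have := hT.leaf_only_child u (T.parent w) hl (by rw [hu.1]; exact hw.2)
    exact this
  exact hw.1.2 (by rw [hpw, hl w hpw])

theorem lbF_leaf (hT : IsDelayedTree T) {t : V} (h : T.isLeaf t) : lbF T t = {t} := by
  ext x
  rw [mem_lbF, Finset.mem_singleton]
  constructor
  · rintro ⟨_, hanc⟩
    exact leaf_anc' h hanc
  · rintro rfl
    exact ⟨h, anc_refl x⟩

theorem lbF_eq_lbU_ch (hT : IsDelayedTree T) {g : V} (hnl : ¬ T.isLeaf g) :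
    lbF T g = lbU T (chF T g) := by
  ext x
  rw [mem_lbF, mem_lbU]
  constructor
  · rintro ⟨hl, hanc⟩
    have hne : x ≠ g := fun h => hnl (h ▸ hl)
    have hd := anc_depth_lt hT hanc hne
    exact ⟨chUp T g x, mem_chF.mpr (isChild_chUp hT hanc hd),
      mem_lbF.mpr ⟨hl, anc_chUp g x⟩⟩
  · rintro ⟨u, hu, hx⟩
    rw [mem_lbF] at hx
    exact ⟨hx.1, anc_trans (anc_of_child (mem_chF.mp hu)) hx.2⟩

theorem lbU_ch_eq (hT : IsDelayedTree T) {R : Finset V} (hnl : ∀ g ∈ R, ¬ T.isLeaf g) :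
    lbU T R = lbU T (R.biUnion (chF T)) := by
  ext x
  rw [mem_lbU, mem_lbU]
  constructor
  · rintro ⟨g, hg, hx⟩
    rw [lbF_eq_lbU_ch hT (hnl g hg), mem_lbU] at hx
    obtain ⟨c, hc, hx⟩ := hx
    exact ⟨c, Finset.mem_biUnion.mpr ⟨g, hg, hc⟩, hx⟩
  · rintro ⟨c, hc, hx⟩
    obtain ⟨g, hg, hc⟩ := Finset.mem_biUnion.mp hc
    refine ⟨g, hg, ?_⟩
    rw [mem_lbF] at hx ⊢
    exact ⟨hx.1, anc_trans (anc_of_child (mem_chF.mp hc)) hx.2⟩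

theorem lbF_eq_lbU_gc (hT : IsDelayedTree T) {g : V} (hgc : (gcF T g).Nonempty) :
    lbF T g = lbU T (gcF T g) := by
  ext x
  rw [mem_lbF, mem_lbU]
  constructor
  · rintro ⟨hl, hanc⟩
    have hnl : ¬ T.isLeaf g := not_leaf_of_gc (mem_gcF.mp hgc.choose_spec)
    have hne : x ≠ g := fun h => hnl (h ▸ hl)
    have hd1 := anc_depth_lt hT hanc hne
    have hne2 : x ≠ chUp T g x := by
      intro hx
      -- x is a leaf child of g; then g's children are all x, so no grandchildren
      have hch : T.isChild x g := hx ▸ isChild_chUp hT hanc hd1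
      obtain ⟨w, hw⟩ := hgc
      rw [mem_gcF] at hw
      have hpw : T.parent w = x := by
        apply hT.leaf_only_child x (T.parent w) hl
        rw [hch.1]
        exact hw.2
      exact hw.1.2 (by rw [hpw, hl w hpw])
    have hd2 : T.depth g + 2 ≤ T.depth x := by
      have h3 : T.anc (chUp T g x) x := anc_chUp g x
      have := anc_depth_lt hT h3 hne2
      rw [depth_chUp hT hd1] at this
      omega
    exact ⟨gcUp T g x, mem_gcF.mpr (isGrandchild_gcUp hT hanc hd2),
      mem_lbF.mpr ⟨hl, anc_gcUp g x⟩⟩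
  · rintro ⟨w, hw, hx⟩
    rw [mem_lbF] at hx
    exact ⟨hx.1, anc_trans (anc_of_gc (mem_gcF.mp hw)) hx.2⟩

theorem lbF_single_of_no_gc (hT : IsDelayedTree T) {g : V} (hgc : gcF T g = ∅) :
    ∃ c, T.isLeaf c ∧ lbF T g = {c} := by
  by_cases hl : T.isLeaf g
  · exact ⟨g, hl, lbF_leaf hT hl⟩
  · obtain ⟨u, hu⟩ := not_leaf_child hT hl
    have hul : T.isLeaf u := by
      by_contra hul
      obtain ⟨c, hc⟩ := not_leaf_child hT hul
      have : c ∈ gcF T g := mem_gcF.mpr ⟨by rw [hc.1]; exact hc, by rw [hc.1]; exact hu⟩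
      rw [hgc] at this
      simp at this
    refine ⟨u, hul, ?_⟩
    ext x
    rw [mem_lbF, Finset.mem_singleton]
    constructor
    · rintro ⟨hxl, hanc⟩
      have hne : x ≠ g := fun h => hl (h ▸ hxl)
      have hd := anc_depth_lt hT hanc hne
      have hch := isChild_chUp hT hanc hd
      have : chUp T g x = u := by
        apply hT.leaf_only_child u (chUp T g x) hul
        rw [hu.1]
        exact hch
      exact leaf_anc' hul (this ▸ anc_chUp g x)
    · rintro rfl
      exact ⟨hul, anc_of_child hu⟩

/-! ### run representatives -/

theorem rep_run_mem (hT : IsDelayedTree T) {t : V} {H : Finset V} (hH : H ⊆ gcF T t) {w : V}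
    (hw : w ∈ H) : rep T (runOf T t H w) ∈ runOf T t H w :=
  rep_mem ⟨w, run_self hT hH hw⟩

theorem runOf_rep (hT : IsDelayedTree T) {t : V} {H : Finset V} (hH : H ⊆ gcF T t) {w : V}
    (hw : w ∈ H) : runOf T t H (rep T (runOf T t H w)) = runOf T t H w :=
  run_eq hT hH hw (rep_run_mem hT hH hw)

theorem parent_rep_run (hT : IsDelayedTree T) {t : V} {H : Finset V} (hH : H ⊆ gcF T t) {w : V}
    (hw : w ∈ H) : T.parent (rep T (runOf T t H w)) = T.parent w :=
  (mem_runOf.mp (rep_run_mem hT hH hw)).2.1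

/-! ### the top permutation of a process (`lexRel` versus `nodeLLT` on representatives) -/

theorem good_top2 (hT : IsDelayedTree T) (hsub : ClosedUnderSubstitution C)
    (hpat : ClosedUnderPatterns C) (hinv : ClosedUnderInverse C)
    (hlab : ∀ t : V, ∀ (m : ℕ) (τ : Equiv.Perm (Fin m)),
      BiorderPerm T.nodeLLT (T.pre t) {x | T.isGrandchild x t} τ → C m τ)
    (t : V) (H : Finset V) (hH : H ⊆ gcF T t) (hne : H.Nonempty) :
    CGood C (lexRel T t) T.nodeLLT (H.image (fun w => rep T (runOf T t H w))) := by
  classical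
  set R : Finset V := H.image (fun w => rep T (runOf T t H w)) with hRdef
  have hRsub : R ⊆ H := by
    intro s hs
    rw [hRdef, Finset.mem_image] at hs
    obtain ⟨w, hw, rfl⟩ := hs
    exact (mem_runOf.mp (rep_run_mem hT hH hw)).1
  have hRgc : R ⊆ gcF T t := fun s hs => hH (hRsub hs)
  set PS : Finset V := R.image T.parent with hPSdef
  have hPSch : PS ⊆ chF T t := by
    intro u hu
    rw [hPSdef, Finset.mem_image] at hu
    obtain ⟨s, hs, rfl⟩ := hu
    exact mem_chF.mpr (mem_gcF.mp (hRgc hs)).2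
  have hgcne : (gcF T t).Nonempty := ⟨hne.choose, hH hne.choose_spec⟩
  have htop := CGood_symm hinv (CGood_subset hpat hPSch
    (good_top_ch hT hpat hlab t (nlc_of_gc hT hgcne)))
  obtain ⟨m, τ, hb, hCτ⟩ := htop
  obtain ⟨ep, hep, hτ⟩ := biorder_iff.mp hb
  apply CGood_glue C hsub (fun i => R.filter (fun a => T.parent a = ep i)) R ?_ ?_ ?_ τ hCτ ?_ ?_ ?_
  · intro a
    constructor
    · intro ha
      have : T.parent a ∈ PS := by rw [hPSdef]; exact Finset.mem_image_of_mem _ ha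
      obtain ⟨i, hi⟩ := hep.2.1 _ this
      exact ⟨i, Finset.mem_filter.mpr ⟨ha, hi.symm⟩⟩
    · rintro ⟨i, hi⟩
      exact (Finset.mem_filter.mp hi).1
  · intro i j hij a ha ha'
    rw [Finset.mem_filter] at ha ha'
    exact hij (hep.inj (by rw [← ha.2, ← ha'.2]))
  · intro i
    have : ep i ∈ PS := hep.1 i
    rw [hPSdef, Finset.mem_image] at this
    obtain ⟨a, ha, hpa⟩ := this
    exact ⟨a, Finset.mem_filter.mpr ⟨ha, hpa⟩⟩
  · intro i j hij a ha b hb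
    rw [Finset.mem_filter] at ha hb
    have hpab : T.parent a ≠ T.parent b := by
      rw [ha.2, hb.2]
      exact fun h => hij (hep.inj h)
    rw [lexRel, if_neg hpab, ha.2, hb.2]
    exact (hep.2.2 i j).symm
  · intro i j hij a ha b hb
    rw [Finset.mem_filter] at ha hb
    have hpab : T.parent a ≠ T.parent b := by
      rw [ha.2, hb.2]
      exact fun h => hij (hep.inj h)
    have hdisj : ∀ z, z ∈ lbF T (T.parent a) → z ∉ lbF T (T.parent b) :=
      lbF_disjoint hT (by
        rw [depth_child hT (mem_gcF.mp (hRgc ha.1)).2, depth_child hT (mem_gcF.mp (hRgc hb.1)).2])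
        hpab
    rw [nodeLLT_anc_iff hT (anc_parent a) (anc_parent b) hdisj, ha.2, hb.2]
    exact (hτ i j).symm
  · intro i
    have hsubB : R.filter (fun a => T.parent a = ep i) ⊆ gcF T t :=
      fun a ha => hRgc (Finset.mem_filter.mp ha).1
    have hbase := CGood_symm hinv (CGood_subset hpat hsubB (goodLab hT hlab t))
    apply CGood_congr ?_ ?_ hbase
    · intro a ha b hb
      rw [Finset.mem_filter] at ha hb
      rw [lexRel, if_pos (by rw [ha.2, hb.2])]
    · intro a _ b _
      exact Iff.rfl

end DSTree
namespace DSTree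
open Classical DSAux

variable {V : Type*} [Fintype V] {T : PreDTree V} {C : PermClass}

theorem realLT_asymm (hW : T.WellFormed) {x y : V} (h : T.realLT x y) : ¬ T.realLT y x :=
  fun h' => hW.1 x (hW.2.1 x y x h h')

theorem elem_facts (hT : IsDelayedTree T) {t : V} {H : Finset V} (hH : H ⊆ gcF T t)
    {g x : V} (hg : g ∈ H) (hx : x ∈ lbF T g) :
    T.anc t x ∧ T.depth t + 2 ≤ T.depth x ∧ gcUp T t x = g := by
  have hgg := mem_gcF.mp (hH hg)
  have hanc : T.anc g x := (mem_lbF.mp hx).2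
  have h1 : T.anc t x := anc_trans (anc_of_gc hgg) hanc
  have hd : T.depth g = T.depth t + 2 := depth_gc hT hgg
  have h2 : T.depth t + 2 ≤ T.depth x := by
    have := anc_depth_le hT hanc
    omega
  exact ⟨h1, h2, gcUp_eq_of_anc hT hgg hanc⟩

theorem run_ne_elem_ne (hT : IsDelayedTree T) {t : V} {H : Finset V} (hH : H ⊆ gcF T t)
    {g₁ g₂ : V} (hg₁ : g₁ ∈ H) (hg₂ : g₂ ∈ H)
    (hrne : runOf T t H g₁ ≠ runOf T t H g₂) : g₁ ≠ g₂ := by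
  rintro rfl
  exact hrne rfl

theorem lb_elem_ne (hT : IsDelayedTree T) {t : V} {H : Finset V} (hH : H ⊆ gcF T t)
    {g₁ g₂ x y : V} (hg₁ : g₁ ∈ H) (hg₂ : g₂ ∈ H) (hgne : g₁ ≠ g₂)
    (hx : x ∈ lbF T g₁) (hy : y ∈ lbF T g₂) : x ≠ y := by
  intro h
  exact lbF_disjoint hT
    (by rw [depth_gc hT (mem_gcF.mp (hH hg₁)), depth_gc hT (mem_gcF.mp (hH hg₂))]) hgne
    x hx (h ▸ hy)

theorem M2_iff (hT : IsDelayedTree T) {t : V} {H : Finset V} (hH : H ⊆ gcF T t)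
    (hsep : ∀ x y, x ∈ lbU T H → y ∈ lbU T H → x ≠ y →
      sep hT T.root (gcF T T.root) x y = sep hT t H x y)
    {g₁ g₂ x y : V} (hg₁ : g₁ ∈ H) (hg₂ : g₂ ∈ H) (hx : x ∈ lbF T g₁) (hy : y ∈ lbF T g₂)
    (hrne : runOf T t H g₁ ≠ runOf T t H g₂) :
    (M2 hT x y ↔ T.nodeLLT (rep T (runOf T t H g₁)) (rep T (runOf T t H g₂))) := by
  obtain ⟨hax, hdx, hgx⟩ := elem_facts hT hH hg₁ hx
  obtain ⟨hay, hdy, hgy⟩ := elem_facts hT hH hg₂ hy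
  have hgne := run_ne_elem_ne hT hH hg₁ hg₂ hrne
  have hxy : x ≠ y := lb_elem_ne hT hH hg₁ hg₂ hgne hx hy
  have hstop : ¬ sepGo T t H x y := by
    intro h
    apply hrne
    rw [← hgx, ← hgy]
    exact h.2.2.2.2.2.2
  have hseq : sep hT T.root (gcF T T.root) x y = (t, H) := by
    rw [hsep x y (mem_lbU.mpr ⟨g₁, hg₁, hx⟩) (mem_lbU.mpr ⟨g₂, hg₂, hy⟩) hxy,
      sep_stop hT hstop]
  rw [M2, hseq]
  constructor
  · rintro ⟨_, _, _, h⟩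
    rw [hgx, hgy] at h
    exact h
  · intro h
    exact ⟨(mem_lbF.mp hx).1, (mem_lbF.mp hy).1, hxy, by rw [hgx, hgy]; exact h⟩

theorem realLT_run_iff (hT : IsDelayedTree T) (hW : T.WellFormed) {t : V} {H : Finset V}
    (hH : H ⊆ gcF T t) {g₁ g₂ x y : V} (hg₁ : g₁ ∈ H) (hg₂ : g₂ ∈ H)
    (hx : x ∈ lbF T g₁) (hy : y ∈ lbF T g₂)
    (hrne : runOf T t H g₁ ≠ runOf T t H g₂) :
    (T.realLT x y ↔ T.pre t (rep T (runOf T t H g₁)) (rep T (runOf T t H g₂))) := by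
  obtain ⟨hax, hdx, hgx⟩ := elem_facts hT hH hg₁ hx
  obtain ⟨hay, hdy, hgy⟩ := elem_facts hT hH hg₂ hy
  have hgne := run_ne_elem_ne hT hH hg₁ hg₂ hrne
  have hxy : x ≠ y := lb_elem_ne hT hH hg₁ hg₂ hgne hx hy
  have hgg₁ := mem_gcF.mp (hH hg₁)
  have hgg₂ := mem_gcF.mp (hH hg₂)
  have hxl := (mem_lbF.mp hx).1
  have hyl := (mem_lbF.mp hy).1
  have hprun := run_pre_iff hT hH hg₁ hg₂ (run_self hT hH hg₁) (run_self hT hH hg₂) hrne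
  by_cases hpp : T.parent g₁ = T.parent g₂
  · -- same parent; use the forcing lemma
    obtain ⟨z, hz, hzp, hzb⟩ := run_sep hT hH hg₁ hg₂ hpp hrne
    have hzp2 : T.parent z ≠ T.parent g₂ := by rw [← hpp]; exact hzp
    have hgzz := mem_gcF.mp (hH hz)
    rcases hzb with ⟨h1, h2⟩ | ⟨h1, h2⟩
    · -- g₁ < z < g₂ : everything below g₁ realLT everything below g₂
      have hfor := realLT_force hT hW hgg₁ hgg₂ hgzz hzp hzp2 h1 h2
      have hp12 : T.pre t g₁ g₂ := hT.pre_trans t g₁ z g₂ h1 h2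
      exact iff_of_true (hfor x hx y hy) (hprun.mp hp12)
    · -- g₂ < z < g₁
      have hfor := realLT_force hT hW hgg₂ hgg₁ hgzz hzp2 hzp h1 h2
      have hp21 : T.pre t g₂ g₁ := hT.pre_trans t g₂ z g₁ h1 h2
      refine iff_of_false (realLT_asymm hW (hfor y hy x hx)) ?_
      intro hcon
      have := hprun.mpr hcon
      exact hT.pre_irrefl t g₁ (hT.pre_trans t g₁ g₂ g₁ this hp21)
  · -- different parents : compare at t directly
    have hu₁ : T.isChild (T.parent g₁) t := hgg₁.2
    have hu₂ : T.isChild (T.parent g₂) t := hgg₂.2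
    have hcca : cca T x y = t :=
      cca_eq hT hu₁ hu₂ hpp (anc_trans (anc_of_child hgg₁.1) (mem_lbF.mp hx).2)
        (anc_trans (anc_of_child hgg₂.1) (mem_lbF.mp hy).2)
    rw [realLT_iff hT hxl hyl hxy, hcca,
      gcUp_eq_of_anc hT hgg₁ (mem_lbF.mp hx).2, gcUp_eq_of_anc hT hgg₂ (mem_lbF.mp hy).2]
    exact hprun

theorem M1_run_iff (hT : IsDelayedTree T) {t : V} {H : Finset V}
    (hH : H ⊆ gcF T t) {g₁ g₂ x y : V} (hg₁ : g₁ ∈ H) (hg₂ : g₂ ∈ H)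
    (hx : x ∈ lbF T g₁) (hy : y ∈ lbF T g₂)
    (hrne : runOf T t H g₁ ≠ runOf T t H g₂) :
    (M1 T x y ↔ lexRel T t (rep T (runOf T t H g₁)) (rep T (runOf T t H g₂))) := by
  obtain ⟨hax, hdx, hgx⟩ := elem_facts hT hH hg₁ hx
  obtain ⟨hay, hdy, hgy⟩ := elem_facts hT hH hg₂ hy
  have hgne := run_ne_elem_ne hT hH hg₁ hg₂ hrne
  have hxy : x ≠ y := lb_elem_ne hT hH hg₁ hg₂ hgne hx hy
  have hgg₁ := mem_gcF.mp (hH hg₁)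
  have hgg₂ := mem_gcF.mp (hH hg₂)
  have hxl := (mem_lbF.mp hx).1
  have hyl := (mem_lbF.mp hy).1
  have hrep₁ : T.parent (rep T (runOf T t H g₁)) = T.parent g₁ := parent_rep_run hT hH hg₁
  have hrep₂ : T.parent (rep T (runOf T t H g₂)) = T.parent g₂ := parent_rep_run hT hH hg₂
  by_cases hpp : T.parent g₁ = T.parent g₂
  · -- same parent u : compare at u with pre t
    set u := T.parent g₁ with hu
    have hcca : cca T x y = u :=
      cca_eq hT hgg₁.1 (by rw [hpp]; exact hgg₂.1) hgne (mem_lbF.mp hx).2 (mem_lbF.mp hy).2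
    have huroot : u ≠ T.root := by
      intro h
      have hch : T.isChild u t := hgg₁.2
      have ht : t = T.root := by rw [← hch.1, h, hT.parent_root]
      exact hch.2 (by rw [h, ht])
    have hchx : chUp T u x = g₁ :=
      chUp_eq_of_anc hT (anc_trans (anc_of_child hgg₁.1) (mem_lbF.mp hx).2) hgg₁.1
        (mem_lbF.mp hx).2
    have hchy : chUp T u y = g₂ :=
      chUp_eq_of_anc hT (anc_trans (anc_of_child (by rw [hpp]; exact hgg₂.1))
        (mem_lbF.mp hy).2) (by rw [hpp]; exact hgg₂.1) (mem_lbF.mp hy).2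
    have hpu : T.parent u = t := hgg₁.2.1
    rw [M1, hcca, hchx, hchy, chOrd, if_neg huroot, hpu, lexRel, if_pos (by rw [hrep₁, hrep₂, hpp])]
    have hprun := run_pre_iff hT hH hg₁ hg₂ (run_self hT hH hg₁) (run_self hT hH hg₂) hrne
    constructor
    · rintro ⟨_, _, _, h⟩
      exact hprun.mp h
    · intro h
      exact ⟨hxl, hyl, hxy, hprun.mpr h⟩
  · -- different parents : compare at t with chOrd
    have hcca : cca T x y = t :=
      cca_eq hT hgg₁.2 hgg₂.2 hpp (anc_trans (anc_of_child hgg₁.1) (mem_lbF.mp hx).2)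
        (anc_trans (anc_of_child hgg₂.1) (mem_lbF.mp hy).2)
    have hchx : chUp T t x = T.parent g₁ :=
      chUp_eq_of_anc hT hax hgg₁.2 (anc_trans (anc_of_child hgg₁.1) (mem_lbF.mp hx).2)
    have hchy : chUp T t y = T.parent g₂ :=
      chUp_eq_of_anc hT hay hgg₂.2 (anc_trans (anc_of_child hgg₂.1) (mem_lbF.mp hy).2)
    rw [M1, hcca, hchx, hchy, lexRel, if_neg (by rw [hrep₁, hrep₂]; exact hpp), hrep₁, hrep₂]
    constructor
    · rintro ⟨_, _, _, h⟩
      exact h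
    · intro h
      exact ⟨hxl, hyl, hxy, h⟩

end DSTree
namespace DSTree
open Classical DSAux

variable {V : Type*} [Fintype V] {T : PreDTree V} {C : PermClass}

theorem good1 (hT : IsDelayedTree T) (hsub : ClosedUnderSubstitution C)
    (hpat : ClosedUnderPatterns C) (hinv : ClosedUnderInverse C)
    (hlab : ∀ t : V, ∀ (m : ℕ) (τ : Equiv.Perm (Fin m)),
      BiorderPerm T.nodeLLT (T.pre t) {x | T.isGrandchild x t} τ → C m τ)
    (hC1 : C 1 1) : ∀ t : V, CGood C T.llt (M1 T) (lbF T t) := by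
  have KEY : ∀ N t, descC T t = N → CGood C T.llt (M1 T) (lbF T t) := by
    intro N
    induction N using Nat.strong_induction_on with
    | _ N IH =>
      intro t hN
      by_cases hgc : gcF T t = ∅
      · obtain ⟨c, hcl, hcset⟩ := lbF_single_of_no_gc hT hgc
        rw [hcset]
        exact CGood_singleton hC1 (hT.llt_irrefl c) (fun h => h.2.2.1 rfl)
      · have hgcne : (gcF T t).Nonempty := Finset.nonempty_iff_ne_empty.mpr hgc
        have hnl : ¬ T.isLeaf t := not_leaf_of_gc (mem_gcF.mp hgcne.choose_spec)
        have hnlc := nlc_of_gc hT hgcne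
        obtain ⟨m, τ, hb, hCτ⟩ := good_top_ch hT hpat hlab t hnlc
        obtain ⟨ech, hech, hτ⟩ := biorder_iff.mp hb
        have hchi : ∀ i, T.isChild (ech i) t := fun i => mem_chF.mp (hech.1 i)
        have hdisj : ∀ i j, i ≠ j → ∀ x, x ∈ lbF T (ech i) → x ∉ lbF T (ech j) := by
          intro i j hij
          exact lbF_disjoint hT
            (by rw [depth_child hT (hchi i), depth_child hT (hchi j)])
            (fun h => hij (hech.inj h))
        apply CGood_glue C hsub (fun i => lbF T (ech i)) (lbF T t) ?_ ?_ ?_ τ hCτ ?_ ?_ ?_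
        · intro x
          constructor
          · intro hx
            rw [lbF_eq_lbU_ch hT hnl, mem_lbU] at hx
            obtain ⟨u, hu, hxu⟩ := hx
            obtain ⟨i, hi⟩ := hech.2.1 u hu
            exact ⟨i, show x ∈ lbF T (ech i) from by rw [hi]; exact hxu⟩
          · rintro ⟨i, hi⟩
            rw [mem_lbF] at hi ⊢
            exact ⟨hi.1, anc_trans (anc_of_child (hchi i)) hi.2⟩
        · exact hdisj
        · intro i
          exact lbF_nonempty hT (ech i)
        · -- P-cross : llt versus block index
          intro i j hij x hx y hy
          rw [llt_iff_nodeLLT hT (hdisj i j hij) hx hy]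
          exact (hech.2.2 i j).symm
        · -- Q-cross : M1 versus τ
          intro i j hij x hx y hy
          have hije : ech i ≠ ech j := fun h => hij (hech.inj h)
          have hxy : x ≠ y := fun h => hdisj i j hij x hx (h ▸ hy)
          have hcca : cca T x y = t :=
            cca_eq hT (hchi i) (hchi j) hije (mem_lbF.mp hx).2 (mem_lbF.mp hy).2
          have hchx : chUp T t x = ech i :=
            chUp_eq_of_anc hT (anc_trans (anc_of_child (hchi i)) (mem_lbF.mp hx).2)
              (hchi i) (mem_lbF.mp hx).2
          have hchy : chUp T t y = ech j :=
            chUp_eq_of_anc hT (anc_trans (anc_of_child (hchi j)) (mem_lbF.mp hy).2)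
              (hchi j) (mem_lbF.mp hy).2
          rw [M1, hcca, hchx, hchy]
          constructor
          · rintro ⟨_, _, _, h⟩
            exact (hτ i j).mpr h
          · intro h
            exact ⟨(mem_lbF.mp hx).1, (mem_lbF.mp hy).1, hxy, (hτ i j).mp h⟩
        · -- recursive goodness of the blocks
          intro i
          exact IH (descC T (ech i))
            (hN ▸ descC_lt hT (anc_of_child (hchi i)) (hchi i).2) (ech i) rfl
  exact fun t => KEY (descC T t) t rfl

end DSTree
namespace DSTree
open Classical DSAux

variable {V : Type*} [Fintype V] {T : PreDTree V} {C : PermClass}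

theorem good3 (hT : IsDelayedTree T) (hW : T.WellFormed) (hsub : ClosedUnderSubstitution C)
    (hpat : ClosedUnderPatterns C) (hinv : ClosedUnderInverse C)
    (hlab : ∀ t : V, ∀ (m : ℕ) (τ : Equiv.Perm (Fin m)),
      BiorderPerm T.nodeLLT (T.pre t) {x | T.isGrandchild x t} τ → C m τ)
    (hC1 : C 1 1) (hC0 : C 0 1) :
    ∀ (N : ℕ) (t : V) (H : Finset V), descC T t = N → H ⊆ gcF T t →
      (∀ x y, x ∈ lbU T H → y ∈ lbU T H → x ≠ y →
        sep hT T.root (gcF T T.root) x y = sep hT t H x y) →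
      CGood C (M2 hT) T.realLT (lbU T H) := by
  intro N
  induction N using Nat.strong_induction_on with
  | _ N IH =>
    intro t H hN hH hsep
    rcases H.eq_empty_or_nonempty with rfl | hHne
    · rw [show lbU T (∅ : Finset V) = ∅ from by simp [lbU]]
      exact CGood_empty hC0
    set R : Finset V := H.image (fun w => rep T (runOf T t H w)) with hRdef
    have hRmem : ∀ s ∈ R, s ∈ H := by
      intro s hs
      rw [hRdef, Finset.mem_image] at hs
      obtain ⟨w, hw, rfl⟩ := hs
      exact (mem_runOf.mp (rep_run_mem hT hH hw)).1
    have hRrep : ∀ s ∈ R, rep T (runOf T t H s) = s := by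
      intro s hs
      rw [hRdef, Finset.mem_image] at hs
      obtain ⟨w, hw, rfl⟩ := hs
      rw [runOf_rep hT hH hw]
    have hRsub : R ⊆ gcF T t := fun s hs => hH (hRmem s hs)
    obtain ⟨m, τ, hb, hCτ⟩ := CGood_subset hpat hRsub (goodLab hT hlab t)
    obtain ⟨er, her, hτ⟩ := biorder_iff.mp hb
    have herH : ∀ i, er i ∈ H := fun i => hRmem _ (her.1 i)
    have herR : ∀ i, rep T (runOf T t H (er i)) = er i := fun i => hRrep _ (her.1 i)
    have hrne : ∀ i j, i ≠ j → runOf T t H (er i) ≠ runOf T t H (er j) := by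
      intro i j hij h
      exact hij (her.inj (by rw [← herR i, ← herR j, h]))
    have hblk : ∀ (i : Fin m) (x : V), x ∈ lbU T (runOf T t H (er i)) →
        ∃ g, g ∈ H ∧ runOf T t H g = runOf T t H (er i) ∧ x ∈ lbF T g := by
      intro i x hx
      rw [mem_lbU] at hx
      obtain ⟨g, hg, hxg⟩ := hx
      exact ⟨g, (mem_runOf.mp hg).1, run_eq hT hH (herH i) hg, hxg⟩
    apply CGood_glue C hsub (fun i => lbU T (runOf T t H (er i))) (lbU T H) ?_ ?_ ?_ τ hCτ ?_ ?_ ?_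
    · intro x
      constructor
      · intro hx
        rw [mem_lbU] at hx
        obtain ⟨w, hw, hxw⟩ := hx
        have hm : rep T (runOf T t H w) ∈ R := by
          rw [hRdef]
          exact Finset.mem_image_of_mem _ hw
        obtain ⟨i, hi⟩ := her.2.1 _ hm
        refine ⟨i, ?_⟩
        show x ∈ lbU T (runOf T t H (er i))
        have hrun : runOf T t H (er i) = runOf T t H w := by
          rw [hi]
          exact runOf_rep hT hH hw
        rw [mem_lbU]
        exact ⟨w, hrun ▸ run_self hT hH hw, hxw⟩
      · rintro ⟨i, hi⟩
        have hi' : x ∈ lbU T (runOf T t H (er i)) := hi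
        rw [mem_lbU] at hi' ⊢
        obtain ⟨g, hg, hxg⟩ := hi'
        exact ⟨g, (mem_runOf.mp hg).1, hxg⟩
    · intro i j hij x hxi hxj
      obtain ⟨g₁, hg₁H, hg₁r, hx₁⟩ := hblk i x hxi
      obtain ⟨g₂, hg₂H, hg₂r, hx₂⟩ := hblk j x hxj
      by_cases hgg : g₁ = g₂
      · subst hgg
        exact hrne i j hij (by rw [← hg₁r, ← hg₂r])
      · exact (lb_elem_ne hT hH hg₁H hg₂H hgg hx₁ hx₂) rfl
    · intro i
      obtain ⟨z, hz⟩ := lbF_nonempty hT (er i)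
      exact ⟨z, mem_lbU.mpr ⟨er i, run_self hT hH (herH i), hz⟩⟩
    · -- P-cross : M2 versus index
      intro i j hij x hx y hy
      obtain ⟨g₁, hg₁H, hg₁r, hx₁⟩ := hblk i x hx
      obtain ⟨g₂, hg₂H, hg₂r, hy₂⟩ := hblk j y hy
      have hr12 : runOf T t H g₁ ≠ runOf T t H g₂ := by
        rw [hg₁r, hg₂r]
        exact hrne i j hij
      rw [M2_iff hT hH hsep hg₁H hg₂H hx₁ hy₂ hr12, hg₁r, hg₂r, herR i, herR j]
      exact (her.2.2 i j).symm
    · -- Q-cross : realLT versus τ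
      intro i j hij x hx y hy
      obtain ⟨g₁, hg₁H, hg₁r, hx₁⟩ := hblk i x hx
      obtain ⟨g₂, hg₂H, hg₂r, hy₂⟩ := hblk j y hy
      have hr12 : runOf T t H g₁ ≠ runOf T t H g₂ := by
        rw [hg₁r, hg₂r]
        exact hrne i j hij
      rw [realLT_run_iff hT hW hH hg₁H hg₂H hx₁ hy₂ hr12, hg₁r, hg₂r, herR i, herR j]
      exact (hτ i j).symm
    · -- recursive goodness of the blocks
      intro i
      show CGood C (M2 hT) T.realLT (lbU T (runOf T t H (er i)))
      by_cases hsing : runOf T t H (er i) = {er i}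
      · rw [hsing, show lbU T ({er i} : Finset V) = lbF T (er i) from by simp [lbU]]
        by_cases hgce : gcF T (er i) = ∅
        · obtain ⟨c, hcl, hcset⟩ := lbF_single_of_no_gc hT hgce
          rw [hcset]
          exact CGood_singleton hC1 (fun h => h.2.2.1 rfl) (hW.1 c)
        · have hgcne' : (gcF T (er i)).Nonempty := Finset.nonempty_iff_ne_empty.mpr hgce
          rw [lbF_eq_lbU_gc hT hgcne']
          have hanc : T.anc t (er i) := anc_of_gc (mem_gcF.mp (hH (herH i)))
          have hne' : er i ≠ t := by
            intro h
            have := depth_gc hT (mem_gcF.mp (hH (herH i)))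
            rw [h] at this
            omega
          apply IH (descC T (er i)) (by rw [← hN]; exact descC_lt hT hanc hne')
            (er i) (gcF T (er i)) rfl (fun s hs => hs) ?_
          intro x y hx hy hxy
          rw [← lbF_eq_lbU_gc hT hgcne'] at hx hy
          have hxH : x ∈ lbU T H := mem_lbU.mpr ⟨er i, herH i, hx⟩
          have hyH : y ∈ lbU T H := mem_lbU.mpr ⟨er i, herH i, hy⟩
          rw [hsep x y hxH hyH hxy]
          obtain ⟨hax, hdx, hgx⟩ := elem_facts hT hH (herH i) hx
          obtain ⟨hay, hdy, hgy⟩ := elem_facts hT hH (herH i) hy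
          have hgo : sepGo T t H x y :=
            ⟨hax, hay, hdx, hdy, by rw [hgx]; exact herH i, by rw [hgy]; exact herH i,
              by rw [hgx, hgy]⟩
          rw [sep_step1 hT hgo (by rw [hgx]; exact hsing), hgx]
      · -- descend into the children of the run
        have heri : er i ∈ runOf T t H (er i) := run_self hT hH (herH i)
        obtain ⟨g', hg'R, hg'ne⟩ : ∃ g', g' ∈ runOf T t H (er i) ∧ g' ≠ er i := by
          by_contra hcon
          push_neg at hcon
          apply hsing
          ext a
          simp only [Finset.mem_singleton]
          exact ⟨fun ha => hcon a ha, fun ha => ha ▸ heri⟩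
        have hRiH : runOf T t H (er i) ⊆ H := fun a ha => (mem_runOf.mp ha).1
        have hRipar : ∀ g ∈ runOf T t H (er i), T.parent g = T.parent (er i) :=
          fun g hg => (mem_runOf.mp hg).2.1
        have hRinl : ∀ g ∈ runOf T t H (er i), ¬ T.isLeaf g := by
          intro g hg hl
          obtain ⟨s, hsR, hsne⟩ : ∃ s, s ∈ runOf T t H (er i) ∧ s ≠ g := by
            by_cases hgi : g = er i
            · exact ⟨g', hg'R, by rw [hgi]; exact hg'ne⟩
            · exact ⟨er i, heri, fun h => hgi h.symm⟩
          have hps : T.parent s = T.parent g := by rw [hRipar s hsR, hRipar g hg]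
          have hchs : T.isChild s (T.parent g) := by
            rw [← hps]
            exact (mem_gcF.mp (hH (hRiH hsR))).1
          exact hsne (hT.leaf_only_child g s hl hchs)
        have hischu : T.isChild (T.parent (er i)) t := (mem_gcF.mp (hH (herH i))).2
        have hH'sub : (runOf T t H (er i)).biUnion (chF T) ⊆ gcF T (T.parent (er i)) := by
          intro c hc
          obtain ⟨g, hgR, hcg⟩ := Finset.mem_biUnion.mp hc
          rw [mem_chF] at hcg
          refine mem_gcF.mpr ⟨⟨rfl, ?_⟩, ?_⟩
          · intro h
            rw [hcg.1] at h
            exact hcg.2 h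
          · rw [hcg.1, ← hRipar g hgR]
            exact (mem_gcF.mp (hH (hRiH hgR))).1
        have hset : lbU T (runOf T t H (er i)) = lbU T ((runOf T t H (er i)).biUnion (chF T)) :=
          lbU_ch_eq hT hRinl
        rw [hset]
        apply IH (descC T (T.parent (er i)))
          (by rw [← hN]; exact descC_lt hT (anc_of_child hischu) hischu.2)
          (T.parent (er i)) _ rfl hH'sub ?_
        intro x y hx hy hxy
        rw [← hset] at hx hy
        obtain ⟨g₁, hg₁, hx₁⟩ := mem_lbU.mp hx
        obtain ⟨g₂, hg₂, hy₂⟩ := mem_lbU.mp hy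
        have hxH : x ∈ lbU T H := mem_lbU.mpr ⟨g₁, hRiH hg₁, hx₁⟩
        have hyH : y ∈ lbU T H := mem_lbU.mpr ⟨g₂, hRiH hg₂, hy₂⟩
        rw [hsep x y hxH hyH hxy]
        obtain ⟨hax, hdx, hgx⟩ := elem_facts hT hH (hRiH hg₁) hx₁
        obtain ⟨hay, hdy, hgy⟩ := elem_facts hT hH (hRiH hg₂) hy₂
        have hrg₁ : runOf T t H g₁ = runOf T t H (er i) := run_eq hT hH (herH i) hg₁
        have hrg₂ : runOf T t H g₂ = runOf T t H (er i) := run_eq hT hH (herH i) hg₂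
        have hgo : sepGo T t H x y :=
          ⟨hax, hay, hdx, hdy, by rw [hgx]; exact hRiH hg₁, by rw [hgy]; exact hRiH hg₂,
            by rw [hgx, hgy, hrg₁, hrg₂]⟩
        have hnsing : runOf T t H (gcUp T t x) ≠ {gcUp T t x} := by
          rw [hgx, hrg₁]
          intro h
          apply hsing
          have hei : er i = g₁ := by
            have h2 := heri
            rw [h, Finset.mem_singleton] at h2
            exact h2
          rw [h, hei]
        rw [sep_step2 hT hgo hnsing, hgx, hrg₁, hRipar g₁ hg₁]
  
end DSTree
namespace DSTree
open Classical DSAux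

variable {V : Type*} [Fintype V] {T : PreDTree V} {C : PermClass}

theorem good2 (hT : IsDelayedTree T) (hW : T.WellFormed) (hsub : ClosedUnderSubstitution C)
    (hpat : ClosedUnderPatterns C) (hinv : ClosedUnderInverse C)
    (hlab : ∀ t : V, ∀ (m : ℕ) (τ : Equiv.Perm (Fin m)),
      BiorderPerm T.nodeLLT (T.pre t) {x | T.isGrandchild x t} τ → C m τ)
    (hC1 : C 1 1) (hC0 : C 0 1) :
    ∀ (N : ℕ) (t : V) (H : Finset V), descC T t = N → H ⊆ gcF T t →
      (∀ x y, x ∈ lbU T H → y ∈ lbU T H → x ≠ y →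
        sep hT T.root (gcF T T.root) x y = sep hT t H x y) →
      CGood C (M1 T) (M2 hT) (lbU T H) := by
  intro N
  induction N using Nat.strong_induction_on with
  | _ N IH =>
    intro t H hN hH hsep
    rcases H.eq_empty_or_nonempty with rfl | hHne
    · rw [show lbU T (∅ : Finset V) = ∅ from by simp [lbU]]
      exact CGood_empty hC0
    set R : Finset V := H.image (fun w => rep T (runOf T t H w)) with hRdef
    have hRmem : ∀ s ∈ R, s ∈ H := by
      intro s hs
      rw [hRdef, Finset.mem_image] at hs
      obtain ⟨w, hw, rfl⟩ := hs
      exact (mem_runOf.mp (rep_run_mem hT hH hw)).1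
    have hRrep : ∀ s ∈ R, rep T (runOf T t H s) = s := by
      intro s hs
      rw [hRdef, Finset.mem_image] at hs
      obtain ⟨w, hw, rfl⟩ := hs
      rw [runOf_rep hT hH hw]
    have hRsub : R ⊆ gcF T t := fun s hs => hH (hRmem s hs)
    obtain ⟨m, τ, hb, hCτ⟩ := good_top2 hT hsub hpat hinv hlab t H hH hHne
    obtain ⟨er, her, hτ⟩ := biorder_iff.mp hb
    have herH : ∀ i, er i ∈ H := fun i => hRmem _ (her.1 i)
    have herR : ∀ i, rep T (runOf T t H (er i)) = er i := fun i => hRrep _ (her.1 i)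
    have hrne : ∀ i j, i ≠ j → runOf T t H (er i) ≠ runOf T t H (er j) := by
      intro i j hij h
      exact hij (her.inj (by rw [← herR i, ← herR j, h]))
    have hblk : ∀ (i : Fin m) (x : V), x ∈ lbU T (runOf T t H (er i)) →
        ∃ g, g ∈ H ∧ runOf T t H g = runOf T t H (er i) ∧ x ∈ lbF T g := by
      intro i x hx
      rw [mem_lbU] at hx
      obtain ⟨g, hg, hxg⟩ := hx
      exact ⟨g, (mem_runOf.mp hg).1, run_eq hT hH (herH i) hg, hxg⟩
    apply CGood_glue C hsub (fun i => lbU T (runOf T t H (er i))) (lbU T H) ?_ ?_ ?_ τ hCτ ?_ ?_ ?_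
    · intro x
      constructor
      · intro hx
        rw [mem_lbU] at hx
        obtain ⟨w, hw, hxw⟩ := hx
        have hm : rep T (runOf T t H w) ∈ R := by
          rw [hRdef]
          exact Finset.mem_image_of_mem _ hw
        obtain ⟨i, hi⟩ := her.2.1 _ hm
        refine ⟨i, ?_⟩
        show x ∈ lbU T (runOf T t H (er i))
        have hrun : runOf T t H (er i) = runOf T t H w := by
          rw [hi]
          exact runOf_rep hT hH hw
        rw [mem_lbU]
        exact ⟨w, hrun ▸ run_self hT hH hw, hxw⟩
      · rintro ⟨i, hi⟩
        have hi' : x ∈ lbU T (runOf T t H (er i)) := hi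
        rw [mem_lbU] at hi' ⊢
        obtain ⟨g, hg, hxg⟩ := hi'
        exact ⟨g, (mem_runOf.mp hg).1, hxg⟩
    · intro i j hij x hxi hxj
      obtain ⟨g₁, hg₁H, hg₁r, hx₁⟩ := hblk i x hxi
      obtain ⟨g₂, hg₂H, hg₂r, hx₂⟩ := hblk j x hxj
      by_cases hgg : g₁ = g₂
      · subst hgg
        exact hrne i j hij (by rw [← hg₁r, ← hg₂r])
      · exact (lb_elem_ne hT hH hg₁H hg₂H hgg hx₁ hx₂) rfl
    · intro i
      obtain ⟨z, hz⟩ := lbF_nonempty hT (er i)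
      exact ⟨z, mem_lbU.mpr ⟨er i, run_self hT hH (herH i), hz⟩⟩
    · -- P-cross : M2 versus index
      intro i j hij x hx y hy
      obtain ⟨g₁, hg₁H, hg₁r, hx₁⟩ := hblk i x hx
      obtain ⟨g₂, hg₂H, hg₂r, hy₂⟩ := hblk j y hy
      have hr12 : runOf T t H g₁ ≠ runOf T t H g₂ := by
        rw [hg₁r, hg₂r]
        exact hrne i j hij
      rw [M1_run_iff hT hH hg₁H hg₂H hx₁ hy₂ hr12, hg₁r, hg₂r, herR i, herR j]
      exact (her.2.2 i j).symm
    · -- Q-cross : realLT versus τ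
      intro i j hij x hx y hy
      obtain ⟨g₁, hg₁H, hg₁r, hx₁⟩ := hblk i x hx
      obtain ⟨g₂, hg₂H, hg₂r, hy₂⟩ := hblk j y hy
      have hr12 : runOf T t H g₁ ≠ runOf T t H g₂ := by
        rw [hg₁r, hg₂r]
        exact hrne i j hij
      rw [M2_iff hT hH hsep hg₁H hg₂H hx₁ hy₂ hr12, hg₁r, hg₂r, herR i, herR j]
      exact (hτ i j).symm
    · -- recursive goodness of the blocks
      intro i
      show CGood C (M1 T) (M2 hT) (lbU T (runOf T t H (er i)))
      by_cases hsing : runOf T t H (er i) = {er i}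
      · rw [hsing, show lbU T ({er i} : Finset V) = lbF T (er i) from by simp [lbU]]
        by_cases hgce : gcF T (er i) = ∅
        · obtain ⟨c, hcl, hcset⟩ := lbF_single_of_no_gc hT hgce
          rw [hcset]
          exact CGood_singleton hC1 (fun h => h.2.2.1 rfl) (fun h => h.2.2.1 rfl)
        · have hgcne' : (gcF T (er i)).Nonempty := Finset.nonempty_iff_ne_empty.mpr hgce
          rw [lbF_eq_lbU_gc hT hgcne']
          have hanc : T.anc t (er i) := anc_of_gc (mem_gcF.mp (hH (herH i)))
          have hne' : er i ≠ t := by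
            intro h
            have := depth_gc hT (mem_gcF.mp (hH (herH i)))
            rw [h] at this
            omega
          apply IH (descC T (er i)) (by rw [← hN]; exact descC_lt hT hanc hne')
            (er i) (gcF T (er i)) rfl (fun s hs => hs) ?_
          intro x y hx hy hxy
          rw [← lbF_eq_lbU_gc hT hgcne'] at hx hy
          have hxH : x ∈ lbU T H := mem_lbU.mpr ⟨er i, herH i, hx⟩
          have hyH : y ∈ lbU T H := mem_lbU.mpr ⟨er i, herH i, hy⟩
          rw [hsep x y hxH hyH hxy]
          obtain ⟨hax, hdx, hgx⟩ := elem_facts hT hH (herH i) hx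
          obtain ⟨hay, hdy, hgy⟩ := elem_facts hT hH (herH i) hy
          have hgo : sepGo T t H x y :=
            ⟨hax, hay, hdx, hdy, by rw [hgx]; exact herH i, by rw [hgy]; exact herH i,
              by rw [hgx, hgy]⟩
          rw [sep_step1 hT hgo (by rw [hgx]; exact hsing), hgx]
      · -- descend into the children of the run
        have heri : er i ∈ runOf T t H (er i) := run_self hT hH (herH i)
        obtain ⟨g', hg'R, hg'ne⟩ : ∃ g', g' ∈ runOf T t H (er i) ∧ g' ≠ er i := by
          by_contra hcon
          push_neg at hcon
          apply hsing
          ext a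
          simp only [Finset.mem_singleton]
          exact ⟨fun ha => hcon a ha, fun ha => ha ▸ heri⟩
        have hRiH : runOf T t H (er i) ⊆ H := fun a ha => (mem_runOf.mp ha).1
        have hRipar : ∀ g ∈ runOf T t H (er i), T.parent g = T.parent (er i) :=
          fun g hg => (mem_runOf.mp hg).2.1
        have hRinl : ∀ g ∈ runOf T t H (er i), ¬ T.isLeaf g := by
          intro g hg hl
          obtain ⟨s, hsR, hsne⟩ : ∃ s, s ∈ runOf T t H (er i) ∧ s ≠ g := by
            by_cases hgi : g = er i
            · exact ⟨g', hg'R, by rw [hgi]; exact hg'ne⟩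
            · exact ⟨er i, heri, fun h => hgi h.symm⟩
          have hps : T.parent s = T.parent g := by rw [hRipar s hsR, hRipar g hg]
          have hchs : T.isChild s (T.parent g) := by
            rw [← hps]
            exact (mem_gcF.mp (hH (hRiH hsR))).1
          exact hsne (hT.leaf_only_child g s hl hchs)
        have hischu : T.isChild (T.parent (er i)) t := (mem_gcF.mp (hH (herH i))).2
        have hH'sub : (runOf T t H (er i)).biUnion (chF T) ⊆ gcF T (T.parent (er i)) := by
          intro c hc
          obtain ⟨g, hgR, hcg⟩ := Finset.mem_biUnion.mp hc
          rw [mem_chF] at hcg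
          refine mem_gcF.mpr ⟨⟨rfl, ?_⟩, ?_⟩
          · intro h
            rw [hcg.1] at h
            exact hcg.2 h
          · rw [hcg.1, ← hRipar g hgR]
            exact (mem_gcF.mp (hH (hRiH hgR))).1
        have hset : lbU T (runOf T t H (er i)) = lbU T ((runOf T t H (er i)).biUnion (chF T)) :=
          lbU_ch_eq hT hRinl
        rw [hset]
        apply IH (descC T (T.parent (er i)))
          (by rw [← hN]; exact descC_lt hT (anc_of_child hischu) hischu.2)
          (T.parent (er i)) _ rfl hH'sub ?_
        intro x y hx hy hxy
        rw [← hset] at hx hy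
        obtain ⟨g₁, hg₁, hx₁⟩ := mem_lbU.mp hx
        obtain ⟨g₂, hg₂, hy₂⟩ := mem_lbU.mp hy
        have hxH : x ∈ lbU T H := mem_lbU.mpr ⟨g₁, hRiH hg₁, hx₁⟩
        have hyH : y ∈ lbU T H := mem_lbU.mpr ⟨g₂, hRiH hg₂, hy₂⟩
        rw [hsep x y hxH hyH hxy]
        obtain ⟨hax, hdx, hgx⟩ := elem_facts hT hH (hRiH hg₁) hx₁
        obtain ⟨hay, hdy, hgy⟩ := elem_facts hT hH (hRiH hg₂) hy₂
        have hrg₁ : runOf T t H g₁ = runOf T t H (er i) := run_eq hT hH (herH i) hg₁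
        have hrg₂ : runOf T t H g₂ = runOf T t H (er i) := run_eq hT hH (herH i) hg₂
        have hgo : sepGo T t H x y :=
          ⟨hax, hay, hdx, hdy, by rw [hgx]; exact hRiH hg₁, by rw [hgy]; exact hRiH hg₂,
            by rw [hgx, hgy, hrg₁, hrg₂]⟩
        have hnsing : runOf T t H (gcUp T t x) ≠ {gcUp T t x} := by
          rw [hgx, hrg₁]
          intro h
          apply hsing
          have hei : er i = g₁ := by
            have h2 := heri
            rw [h, Finset.mem_singleton] at h2
            exact h2
          rw [h, hei]
        rw [sep_step2 hT hgo hnsing, hgx, hrg₁, hRipar g₁ hg₁]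
  
end DSTree

open DSAux DSTree

/-- If `C` is closed under substitution, taking patterns, and inverse, then every
permutation obtained by delayed substitution from `C` (i.e. realised by a well-formed
delayed structured tree all of whose local permutations `(<_t, ≺_t)` on grandchildren
belong to `C`) is a product of at most 3 permutations of `C`. -/
theorem delayed_substitution_decomposition (C : PermClass)
    (hsub : ClosedUnderSubstitution C) (hpat : ClosedUnderPatterns C)
    (hinv : ClosedUnderInverse C)
    {V : Type*} [Fintype V] (T : PreDTree V) (hT : IsDelayedTree T) (hW : T.WellFormed)
    (hlab : ∀ t : V, ∀ (m : ℕ) (τ : Equiv.Perm (Fin m)),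
      BiorderPerm T.nodeLLT (T.pre t) {x | T.isGrandchild x t} τ → C m τ)
    (n : ℕ) (σ : Equiv.Perm (Fin n))
    (hσ : BiorderPerm T.llt T.realLT {x | T.isLeaf x} σ) :
    ∃ l : List (Equiv.Perm (Fin n)), l.length ≤ 3 ∧ (∀ τ ∈ l, C n τ) ∧ l.prod = σ := by
  classical
  by_cases hn : n ≤ 1
  · refine ⟨[], by simp, by simp, ?_⟩
    apply Equiv.ext
    intro x
    exact Fin.ext (by
      have h1 : ((List.prod [] : Equiv.Perm (Fin n)) x : ℕ) < n := Fin.is_lt _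
      have h2 : (x : ℕ) < n := Fin.is_lt _
      omega)
  push_neg at hn
  set L : Finset V := Finset.univ.filter (fun x => T.isLeaf x) with hL
  have hLcoe : (↑L : Set V) = {x | T.isLeaf x} := by ext z; simp [hL]
  have hσb : BiorderPerm T.llt T.realLT ↑L σ := by rw [hLcoe]; exact hσ
  have hLlb : L = lbF T T.root := by
    ext z
    simp only [hL, Finset.mem_filter, Finset.mem_univ, true_and, mem_lbF]
    exact ⟨fun h => ⟨h, anc_root hT z⟩, fun h => h.1⟩
  have hcard : n = L.card := biorder_card hσb
  -- two distinct leaves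
  obtain ⟨e, he, hq⟩ := biorder_iff.mp hσb
  have hleafL : ∀ z ∈ L, T.isLeaf z := by
    intro z hz
    rw [hL, Finset.mem_filter] at hz
    exact hz.2
  have hx₀ : T.isLeaf (e ⟨0, by omega⟩) := hleafL _ (he.1 ⟨0, by omega⟩)
  have hy₀ : T.isLeaf (e ⟨1, by omega⟩) := hleafL _ (he.1 ⟨1, by omega⟩)
  have hxy₀ : e ⟨0, by omega⟩ ≠ e ⟨1, by omega⟩ := by
    intro h
    have := he.inj h
    simp [Fin.ext_iff] at this
  -- C contains the identity of sizes 0 and 1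
  obtain ⟨m₀, τ₀, hb₀, hCτ₀⟩ := goodLab hT hlab (cca T (e ⟨0, by omega⟩) (e ⟨1, by omega⟩))
  have hgcc : (gcF T (cca T (e ⟨0, by omega⟩) (e ⟨1, by omega⟩))).Nonempty := by
    refine ⟨gcUp T (cca T (e ⟨0, by omega⟩) (e ⟨1, by omega⟩)) (e ⟨0, by omega⟩), ?_⟩
    exact mem_gcF.mpr (isGrandchild_gcUp hT
      (cca_spec hT _ _).1 (depth_cca_left hT hx₀ hy₀ hxy₀))
  have hm₀ : 1 ≤ m₀ := by
    rw [biorder_card hb₀]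
    exact Finset.card_pos.mpr hgcc
  have hC1 : C 1 1 := by
    apply hpat 1 m₀ 1 τ₀ ?_ hCτ₀
    refine ⟨fun _ => ⟨0, by omega⟩, ?_, ?_⟩
    · intro i j h
      exact absurd (Subsingleton.elim i j) (Fin.ne_of_lt h)
    · intro i j
      rw [Subsingleton.elim i j]
      simp
  have hC0 : C 0 1 := by
    apply hpat 0 m₀ 1 τ₀ ?_ hCτ₀
    exact ⟨Fin.elim0, fun i => i.elim0, fun i => i.elim0⟩
  -- structure of the root
  have hroot_nl : ¬ T.isLeaf T.root := by
    intro h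
    have hset : L = {T.root} := by rw [hLlb]; exact lbF_leaf hT h
    rw [hset] at hcard
    simp at hcard
    omega
  have hgcroot : (gcF T T.root).Nonempty := by
    by_contra hgc
    obtain ⟨c, hcl, hcset⟩ := lbF_single_of_no_gc hT (Finset.not_nonempty_iff_eq_empty.mp hgc)
    rw [hLlb, hcset] at hcard
    simp at hcard
    omega
  have hset3 : lbU T (gcF T T.root) = lbF T T.root := (lbF_eq_lbU_gc hT hgcroot).symm
  -- the three factors
  obtain ⟨n₁, ρ₁, hb₁, hCρ₁⟩ := good1 hT hsub hpat hinv hlab hC1 T.root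
  obtain ⟨n₂, ρ₂, hb₂, hCρ₂⟩ := good2 hT hW hsub hpat hinv hlab hC1 hC0
    (descC T T.root) T.root (gcF T T.root) rfl (fun s hs => hs) (fun x y _ _ _ => rfl)
  obtain ⟨n₃, ρ₃, hb₃, hCρ₃⟩ := good3 hT hW hsub hpat hinv hlab hC1 hC0
    (descC T T.root) T.root (gcF T T.root) rfl (fun s hs => hs) (fun x y _ _ _ => rfl)
  rw [hset3, ← hLlb] at hb₂ hb₃
  rw [← hLlb] at hb₁
  have hn₁ : n₁ = n := by rw [biorder_card hb₁, ← hcard]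
  have hn₂ : n₂ = n := by rw [biorder_card hb₂, ← hcard]
  have hn₃ : n₃ = n := by rw [biorder_card hb₃, ← hcard]
  subst hn₁ hn₂ hn₃
  have hb21 := biorder_comp hb₁ hb₂
  have hb321 := biorder_comp hb21 hb₃
  have hσeq : σ = ρ₃ * (ρ₂ * ρ₁) := biorder_unique hσb hb321
  refine ⟨[ρ₃, ρ₂, ρ₁], by simp, ?_, ?_⟩
  · intro τ hτ
    simp only [List.mem_cons, List.not_mem_nil, or_false] at hτ
    rcases hτ with rfl | rfl | rfl
    · exact hCρ₃
    · exact hCρ₂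
    · exact hCρ₁
  · simp [hσeq, List.prod_cons]
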